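/- arXiv:1701.02167 — 5 statements merged into one kernel-verified Lean document; each statement's English description precedes it below -/
import Mathlib

section
/- Let φ : ℝ → ℝ be nondecreasing, right-continuous and nonnegative, with φ(u) = 0 for all u < 0. Set γ₀(t) := φ(t) + t and, for integers n ≥ 1, γ_n(t) := n·∫_{t−1/n}^{t} γ₀(u) du. Then: (i) for every t ∈ ℝ one has γ_n(t) < γ₀(t) < γ_n(t + 1/n); (ii) defining γ⁻¹(s) := inf{u > 0 : γ(u) > s}, for every s ≥ 0 one has γ_n⁻¹(s) − 1/n < γ₀⁻¹(s) < γ_n⁻¹(s). -/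
open Filter Set MeasureTheory Topology

noncomputable section

set_option maxHeartbeats 2000000 in
/-- the time-change sandwich for Wong–Zakai averaging. With
`γ₀(t) = φ(t) + t` for a nondecreasing right-continuous nonnegative `φ` vanishing on
`(−∞,0)`, and `γₙ(t) = n ∫_{t−1/n}^t γ₀(u) du`, one has
(i) `γₙ(t) < γ₀(t) < γₙ(t + 1/n)` for every `t`, and
(ii) for the generalized inverses `γ⁻¹(s) = inf{u > 0 : γ(u) > s}`, one has
`γₙ⁻¹(s) − 1/n < γ₀⁻¹(s) < γₙ⁻¹(s)` for every `s ≥ 0`. -/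
theorem time_change_sandwich
    (φ : ℝ → ℝ) (hmono : Monotone φ)
    (hrc : ∀ t : ℝ, Filter.Tendsto φ (nhdsWithin t (Set.Ici t)) (nhds (φ t)))
    (hnonneg : ∀ t : ℝ, 0 ≤ φ t) (hzero : ∀ u < (0:ℝ), φ u = 0)
    (γ₀ : ℝ → ℝ) (hγ₀ : ∀ t, γ₀ t = φ t + t)
    (γ : ℕ → ℝ → ℝ)
    (hγ : ∀ n : ℕ, 1 ≤ n → ∀ t, γ n t = (n:ℝ) * ∫ u in (t - 1/(n:ℝ))..t, γ₀ u) :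
    (∀ n : ℕ, 1 ≤ n → ∀ t : ℝ, γ n t < γ₀ t ∧ γ₀ t < γ n (t + 1/(n:ℝ))) ∧
    (∀ n : ℕ, 1 ≤ n → ∀ s : ℝ, 0 ≤ s →
      sInf {u : ℝ | 0 < u ∧ s < γ n u} - 1/(n:ℝ) < sInf {u : ℝ | 0 < u ∧ s < γ₀ u} ∧
      sInf {u : ℝ | 0 < u ∧ s < γ₀ u} < sInf {u : ℝ | 0 < u ∧ s < γ n u}) := by
  have hγ₀mono : Monotone γ₀ := by
    intro x y hxy
    rw [hγ₀ x, hγ₀ y]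
    exact add_le_add (hmono hxy) hxy
  have hγInt : ∀ c d : ℝ, IntervalIntegrable γ₀ volume c d := fun c d =>
    hγ₀mono.intervalIntegrable
  -- the affine integral computation
  have haff : ∀ c d C : ℝ, (∫ u in c..d, (u + C)) = (d^2 - c^2)/2 + (d - c) * C := by
    intro c d C
    rw [intervalIntegral.integral_add intervalIntegral.intervalIntegrable_id
      (intervalIntegrable_const (c := C)),
      integral_id, intervalIntegral.integral_const, smul_eq_mul]
  -- key1 : γₙ(t) ≤ γ₀(t) - 1/(2n)
  have key1 : ∀ n : ℕ, 1 ≤ n → ∀ t : ℝ, γ n t ≤ γ₀ t - 1/(2*(n:ℝ)) := by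
    intro n hn t
    have hn1 : (1:ℝ) ≤ (n:ℝ) := by exact_mod_cast hn
    have hnp : (0:ℝ) < (n:ℝ) := by linarith
    have hn0 : (n:ℝ) ≠ 0 := ne_of_gt hnp
    have hh : (0:ℝ) < 1/(n:ℝ) := by positivity
    rw [hγ n hn t]
    have hb : (∫ u in (t - 1/(n:ℝ))..t, γ₀ u) ≤ ∫ u in (t - 1/(n:ℝ))..t, (u + (γ₀ t - t)) := by
      apply intervalIntegral.integral_mono_on (by linarith) (hγInt _ _)
        (intervalIntegral.intervalIntegrable_id.add
          (intervalIntegrable_const (c := γ₀ t - t)))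
      intro x hx
      have h1 := hmono hx.2
      rw [hγ₀ x, hγ₀ t]
      linarith
    rw [haff] at hb
    have hmul := mul_le_mul_of_nonneg_left hb (le_of_lt hnp)
    have hid : (n:ℝ) * ((t^2 - (t - 1/(n:ℝ))^2)/2 + (t - (t - 1/(n:ℝ))) * (γ₀ t - t))
        = γ₀ t - 1/(2*(n:ℝ)) := by
      field_simp
      ring
    linarith [hid ▸ hmul]
  -- key2 : γ₀(t) + 1/(2n) ≤ γₙ(t + 1/n)
  have key2 : ∀ n : ℕ, 1 ≤ n → ∀ t : ℝ, γ₀ t + 1/(2*(n:ℝ)) ≤ γ n (t + 1/(n:ℝ)) := by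
    intro n hn t
    have hn1 : (1:ℝ) ≤ (n:ℝ) := by exact_mod_cast hn
    have hnp : (0:ℝ) < (n:ℝ) := by linarith
    have hn0 : (n:ℝ) ≠ 0 := ne_of_gt hnp
    have hh : (0:ℝ) < 1/(n:ℝ) := by positivity
    rw [hγ n hn (t + 1/(n:ℝ)), show t + 1/(n:ℝ) - 1/(n:ℝ) = t from by ring]
    have hb : (∫ u in t..(t + 1/(n:ℝ)), (u + (γ₀ t - t))) ≤ ∫ u in t..(t + 1/(n:ℝ)), γ₀ u := by
      apply intervalIntegral.integral_mono_on (by linarith)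
        (intervalIntegral.intervalIntegrable_id.add
          (intervalIntegrable_const (c := γ₀ t - t))) (hγInt _ _)
      intro x hx
      have h1 := hmono hx.1
      rw [hγ₀ x, hγ₀ t]
      linarith
    rw [haff] at hb
    have hmul := mul_le_mul_of_nonneg_left hb (le_of_lt hnp)
    have hid : (n:ℝ) * (((t + 1/(n:ℝ))^2 - t^2)/2 + ((t + 1/(n:ℝ)) - t) * (γ₀ t - t))
        = γ₀ t + 1/(2*(n:ℝ)) := by
      field_simp
      ring
    linarith [hid ▸ hmul]
  -- monotonicity of γₙ
  have hγmono : ∀ n : ℕ, 1 ≤ n → Monotone (γ n) := by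
    intro n hn x y hxy
    have hn1 : (1:ℝ) ≤ (n:ℝ) := by exact_mod_cast hn
    have hnp : (0:ℝ) < (n:ℝ) := by linarith
    rw [hγ n hn x, hγ n hn y]
    set d := y - x with hd
    have hd0 : 0 ≤ d := by simp [hd]; linarith
    have hint2 : IntervalIntegrable (fun u => γ₀ (u + d)) volume (x - 1/(n:ℝ)) x := by
      have h := (hγInt (x - 1/(n:ℝ) + d) (x + d)).comp_add_right d
      rwa [show x - 1/(n:ℝ) + d - d = x - 1/(n:ℝ) from by ring, show x + d - d = x from by ring] at h
    have h1 : (∫ u in (x - 1/(n:ℝ))..x, γ₀ u) ≤ ∫ u in (x - 1/(n:ℝ))..x, γ₀ (u + d) := by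
      apply intervalIntegral.integral_mono_on (by linarith [show (0:ℝ) < 1/(n:ℝ) from by positivity]) (hγInt _ _) hint2
      intro u _
      exact hγ₀mono (by linarith)
    have h2 : (∫ u in (x - 1/(n:ℝ))..x, γ₀ (u + d)) = ∫ u in (x - 1/(n:ℝ) + d)..(x + d), γ₀ u :=
      intervalIntegral.integral_comp_add_right γ₀ d
    rw [h2, show x - 1/(n:ℝ) + d = y - 1/(n:ℝ) from by rw [hd]; ring,
      show x + d = y from by rw [hd]; ring] at h1
    exact mul_le_mul_of_nonneg_left h1 (le_of_lt hnp)
  -- modulus bound : γₙ(t) - γₙ(t-δ) ≤ n δ (γ₀(t) - γ₀(t-δ-1/n))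
  have hγdiff : ∀ n : ℕ, 1 ≤ n → ∀ t δ : ℝ, 0 ≤ δ →
      γ n t - γ n (t - δ) ≤ (n:ℝ) * δ * (γ₀ t - γ₀ (t - δ - 1/(n:ℝ))) := by
    intro n hn t δ hδ
    have hn1 : (1:ℝ) ≤ (n:ℝ) := by exact_mod_cast hn
    have hnp : (0:ℝ) < (n:ℝ) := by linarith
    have hh : (0:ℝ) < 1/(n:ℝ) := by positivity
    rw [hγ n hn t, hγ n hn (t - δ)]
    have A := intervalIntegral.integral_add_adjacent_intervals
      (hγInt (t - δ - 1/(n:ℝ)) (t - δ)) (hγInt (t - δ) t)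
    have B := intervalIntegral.integral_add_adjacent_intervals
      (hγInt (t - δ - 1/(n:ℝ)) (t - 1/(n:ℝ))) (hγInt (t - 1/(n:ℝ)) t)
    have C1 : (∫ u in (t - δ)..t, γ₀ u) ≤ δ * γ₀ t := by
      have h := intervalIntegral.integral_mono_on (by linarith) (hγInt (t - δ) t)
        (intervalIntegrable_const (c := γ₀ t))
        (fun x hx => hγ₀mono hx.2)
      rwa [intervalIntegral.integral_const, smul_eq_mul,
        show t - (t - δ) = δ from by ring] at h
    have C2 : δ * γ₀ (t - δ - 1/(n:ℝ)) ≤ ∫ u in (t - δ - 1/(n:ℝ))..(t - 1/(n:ℝ)), γ₀ u := by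
      have h := intervalIntegral.integral_mono_on (by linarith)
        (intervalIntegrable_const (c := γ₀ (t - δ - 1/(n:ℝ))))
        (hγInt (t - δ - 1/(n:ℝ)) (t - 1/(n:ℝ)))
        (fun x hx => hγ₀mono hx.1)
      rwa [intervalIntegral.integral_const, smul_eq_mul,
        show t - 1/(n:ℝ) - (t - δ - 1/(n:ℝ)) = δ from by ring] at h
    have hD : (∫ u in (t - 1/(n:ℝ))..t, γ₀ u) - (∫ u in (t - δ - 1/(n:ℝ))..(t - δ), γ₀ u)
        ≤ δ * γ₀ t - δ * γ₀ (t - δ - 1/(n:ℝ)) := by linarith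
    nlinarith [mul_le_mul_of_nonneg_left hD (le_of_lt hnp)]
  constructor
  · -- part (i)
    intro n hn t
    have hn1 : (1:ℝ) ≤ (n:ℝ) := by exact_mod_cast hn
    have h2n : (0:ℝ) < 1/(2*(n:ℝ)) := by positivity
    exact ⟨lt_of_le_of_lt (key1 n hn t) (by linarith),
      lt_of_lt_of_le (by linarith) (key2 n hn t)⟩
  · -- part (ii)
    intro n hn s hs
    have hn1 : (1:ℝ) ≤ (n:ℝ) := by exact_mod_cast hn
    have hnp : (0:ℝ) < (n:ℝ) := by linarith
    have hn0 : (n:ℝ) ≠ 0 := ne_of_gt hnp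
    have hh : (0:ℝ) < 1/(n:ℝ) := by positivity
    have hhalf : 1/(2*(n:ℝ)) + 1/(2*(n:ℝ)) = 1/(n:ℝ) := by ring
    have h2n : 1/(2*(n:ℝ)) ≤ 1/(n:ℝ) := by linarith
    set A₀ : Set ℝ := {u : ℝ | 0 < u ∧ s < γ₀ u} with hA₀def
    set A₁ : Set ℝ := {u : ℝ | 0 < u ∧ s < γ n u} with hA₁def
    set a := sInf A₀ with hadef
    have hA₀ne : A₀.Nonempty := by
      refine ⟨s + 1, by linarith, ?_⟩
      rw [hγ₀]
      have := hnonneg (s + 1)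
      linarith
    have hA₀bdd : BddBelow A₀ := ⟨0, fun u hu => hu.1.le⟩
    have hA₁bdd : BddBelow A₁ := ⟨0, fun u hu => hu.1.le⟩
    have hA₁ne : A₁.Nonempty := by
      refine ⟨s + 1 + 1/(n:ℝ), by linarith, ?_⟩
      have h1 := key2 n hn (s + 1)
      have h2 : s + 1 ≤ γ₀ (s + 1) := by rw [hγ₀]; linarith [hnonneg (s + 1)]
      have h3 : (0:ℝ) < 1/(2*(n:ℝ)) := by positivity
      linarith
    have ha0 : 0 ≤ a := le_csInf hA₀ne fun u hu => hu.1.le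
    have hIoi : ∀ u, a < u → s < γ₀ u := by
      intro u hu
      obtain ⟨v, hv, hvu⟩ := exists_lt_of_csInf_lt hA₀ne hu
      exact lt_of_lt_of_le hv.2 (hγ₀mono hvu.le)
    have hγa : s ≤ γ₀ a := by
      have h1 : Tendsto (fun u => φ u + u) (nhdsWithin a (Set.Ici a)) (nhds (φ a + a)) :=
        (hrc a).add ((continuous_id.tendsto a).mono_left nhdsWithin_le_nhds)
      have h2 : Tendsto γ₀ (nhdsWithin a (Set.Ici a)) (nhds (γ₀ a)) := by
        rw [hγ₀ a]
        exact h1.congr fun u => (hγ₀ u).symm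
      have h3 : Tendsto γ₀ (nhdsWithin a (Set.Ioi a)) (nhds (γ₀ a)) :=
        h2.mono_left (nhdsWithin_mono a Ioi_subset_Ici_self)
      refine ge_of_tendsto h3 ?_
      filter_upwards [self_mem_nhdsWithin] with u hu
      exact (hIoi u hu).le
    have K : ∀ u, 0 ≤ u → u < a → γ₀ u + (a - u) ≤ s := by
      intro u hu hua
      by_contra hcon
      push_neg at hcon
      set ε := γ₀ u + (a - u) - s with hε
      have hεpos : 0 < ε := by linarith
      set v := (max u (a - ε) + a) / 2 with hv
      have hm1 : max u (a - ε) < a := max_lt hua (by linarith)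
      have hva : v < a := by rw [hv]; linarith
      have huv : u < v := by
        have h := le_max_left u (a - ε)
        rw [hv]; linarith
      have hvε : a - ε < v := by
        have h := le_max_right u (a - ε)
        rw [hv]; linarith
      have hv0 : 0 < v := lt_of_le_of_lt hu huv
      have hγv : γ₀ v ≤ s := by
        by_contra h2
        push_neg at h2
        have : a ≤ v := csInf_le hA₀bdd ⟨hv0, h2⟩
        linarith
      have hstep : γ₀ u + (v - u) ≤ γ₀ v := by
        rw [hγ₀ u, hγ₀ v]
        have := hmono huv.le
        linarith
      linarith
    have hale : a ≤ s := by
      rcases le_or_gt a 0 with h | h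
      · linarith
      · have h1 := K 0 le_rfl h
        rw [hγ₀ 0] at h1
        have h2 := hnonneg 0
        linarith
    have hptw : ∀ u, u < a → γ₀ u ≤ s - (a - u) := by
      intro u hu
      rcases le_or_gt 0 u with h | h
      · linarith [K u h hu]
      · rw [hγ₀ u, hzero u h]
        linarith
    -- first strictness: sInf A₀ + δ ≤ sInf A₁
    obtain ⟨M, hM⟩ : ∃ M : ℝ, M = γ₀ (a + 1) - s + 1 := ⟨_, rfl⟩
    have hM1 : (1:ℝ) ≤ M := by
      have := hγ₀mono (show a ≤ a + 1 by linarith)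
      rw [hM]; linarith
    have hM0 : M ≠ 0 := by linarith
    have h8M : (0:ℝ) < 8*(n:ℝ)^2*M := by
      have hn2 : (0:ℝ) < (n:ℝ)^2 := by positivity
      nlinarith
    obtain ⟨δ, hδdef⟩ : ∃ δ : ℝ, δ = min (1/(2*(n:ℝ))) (1/(8*(n:ℝ)^2*M)) := ⟨_, rfl⟩
    have hδpos : 0 < δ := by
      rw [hδdef]
      exact lt_min (by positivity) (one_div_pos.mpr h8M)
    have hδ1 : δ ≤ 1/(2*(n:ℝ)) := hδdef ▸ min_le_left _ _
    have hδ2 : δ ≤ 1/(8*(n:ℝ)^2*M) := hδdef ▸ min_le_right _ _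
    have hδle1 : δ ≤ 1 := by
      have : 1/(2*(n:ℝ)) ≤ 1 := by
        rw [div_le_one (by positivity)]; linarith
      linarith
    have hδh : δ ≤ 1/(n:ℝ) := le_trans hδ1 h2n
    have hsplit : γ n (a + δ) ≤ s := by
      rw [hγ n hn (a + δ)]
      have hc : a + δ - 1/(n:ℝ) ≤ a := by linarith
      have hsp := intervalIntegral.integral_add_adjacent_intervals
        (hγInt (a + δ - 1/(n:ℝ)) a) (hγInt a (a + δ))
      have hI1 : (∫ u in (a + δ - 1/(n:ℝ))..a, γ₀ u)
          ≤ (a^2 - (a + δ - 1/(n:ℝ))^2)/2 + (a - (a + δ - 1/(n:ℝ))) * (s - a) := by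
        rw [← haff]
        apply intervalIntegral.integral_mono_ae_restrict hc (hγInt _ _)
          (intervalIntegral.intervalIntegrable_id.add
            (intervalIntegrable_const (c := s - a)))
        have h1 : ∀ᵐ u : ℝ, u ≠ a := by
          rw [ae_iff]; simp only [not_ne_iff]
          exact measure_singleton a
        filter_upwards [ae_restrict_of_ae h1, ae_restrict_mem measurableSet_Icc] with u hne hu
        have hua : u < a := lt_of_le_of_ne hu.2 hne
        have := hptw u hua
        linarith
      have hI2 : (∫ u in a..(a + δ), γ₀ u) ≤ δ * γ₀ (a + δ) := by
        have h := intervalIntegral.integral_mono_on (by linarith) (hγInt a (a + δ))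
          (intervalIntegrable_const (c := γ₀ (a + δ)))
          (fun x hx => hγ₀mono hx.2)
        rwa [intervalIntegral.integral_const, smul_eq_mul,
          show a + δ - a = δ from by ring] at h
      have hre : (a^2 - (a + δ - 1/(n:ℝ))^2)/2 + (a - (a + δ - 1/(n:ℝ))) * (s - a)
          = (1/(n:ℝ) - δ) * s - (1/(n:ℝ) - δ)^2/2 := by ring
      have hI : (∫ u in (a + δ - 1/(n:ℝ))..(a + δ), γ₀ u)
          ≤ (1/(n:ℝ) - δ) * s - (1/(n:ℝ) - δ)^2/2 + δ * γ₀ (a + δ) := by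
        rw [← hsp]; linarith [hre ▸ hI1]
      have hmul := mul_le_mul_of_nonneg_left hI (le_of_lt hnp)
      have hexp : (n:ℝ) * ((1/(n:ℝ) - δ) * s - (1/(n:ℝ) - δ)^2/2 + δ * γ₀ (a + δ))
          = s - (n:ℝ)*δ*s + (n:ℝ)*δ*γ₀ (a + δ) - (n:ℝ)*(1/(n:ℝ) - δ)^2/2 := by
        field_simp
        ring
      -- bound the error terms
      have e0 : γ₀ (a + δ) - s ≤ M := by
        have := hγ₀mono (show a + δ ≤ a + 1 by linarith)
        rw [hM]; linarith
      have e3 : (n:ℝ)*δ*(γ₀ (a + δ) - s) ≤ (n:ℝ)*M*δ := by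
        have h := mul_le_mul_of_nonneg_left e0 (mul_nonneg hnp.le hδpos.le)
        nlinarith
      have e1 : (n:ℝ)*M*δ ≤ 1/(8*(n:ℝ)) := by
        have h := mul_le_mul_of_nonneg_left hδ2 (mul_nonneg hnp.le (by linarith : (0:ℝ) ≤ M))
        have hid : (n:ℝ)*M*(1/(8*(n:ℝ)^2*M)) = 1/(8*(n:ℝ)) := by
          field_simp
        linarith [hid ▸ h]
      have e2 : 1/(8*(n:ℝ)) ≤ (n:ℝ) * (1/(n:ℝ) - δ)^2/2 := by
        have h1 : 1/(2*(n:ℝ)) ≤ 1/(n:ℝ) - δ := by linarith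
        have h2 : (0:ℝ) < 1/(2*(n:ℝ)) := by positivity
        have h3 : (1/(2*(n:ℝ)))^2 ≤ (1/(n:ℝ) - δ)^2 := by nlinarith
        have h4 : (n:ℝ) * (1/(2*(n:ℝ)))^2/2 = 1/(8*(n:ℝ)) := by
          field_simp
          ring
        nlinarith
      rw [hexp] at hmul
      linarith
    have hblow : ∀ u ∈ A₁, a + δ ≤ u := by
      intro u hu
      by_contra hcon
      push_neg at hcon
      have := hγmono n hn hcon.le
      exact absurd hu.2 (by linarith)
    have hab2 : a + δ ≤ sInf A₁ := le_csInf hA₁ne hblow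
    -- second strictness: sInf A₁ < a + 1/n
    obtain ⟨M₂, hM₂⟩ : ∃ M₂ : ℝ, M₂ = γ₀ (a + 1/(n:ℝ)) - γ₀ (a - 1) + 1 := ⟨_, rfl⟩
    have hM₂1 : (1:ℝ) ≤ M₂ := by
      have := hγ₀mono (show a - 1 ≤ a + 1/(n:ℝ) by linarith)
      rw [hM₂]; linarith
    have hM₂0 : M₂ ≠ 0 := by linarith
    have h4M : (0:ℝ) < 4*(n:ℝ)^2*M₂ := by
      have hn2 : (0:ℝ) < (n:ℝ)^2 := by positivity
      nlinarith
    obtain ⟨δ₂, hδ₂def⟩ : ∃ δ₂ : ℝ, δ₂ = min (1/(2*(n:ℝ))) (1/(4*(n:ℝ)^2*M₂)) := ⟨_, rfl⟩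
    have hδ₂pos : 0 < δ₂ := by
      rw [hδ₂def]
      exact lt_min (by positivity) (one_div_pos.mpr h4M)
    have hδ₂1 : δ₂ ≤ 1/(2*(n:ℝ)) := hδ₂def ▸ min_le_left _ _
    have hδ₂2 : δ₂ ≤ 1/(4*(n:ℝ)^2*M₂) := hδ₂def ▸ min_le_right _ _
    have hδ₂le1 : δ₂ ≤ 1 := by
      have : 1/(2*(n:ℝ)) ≤ 1 := by
        rw [div_le_one (by positivity)]; linarith
      linarith
    have hwdiff := hγdiff n hn (a + 1/(n:ℝ)) δ₂ hδ₂pos.le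
    have hw2 : (n:ℝ) * δ₂ * (γ₀ (a + 1/(n:ℝ)) - γ₀ (a + 1/(n:ℝ) - δ₂ - 1/(n:ℝ)))
        ≤ 1/(4*(n:ℝ)) := by
      have hlow : γ₀ (a - 1) ≤ γ₀ (a + 1/(n:ℝ) - δ₂ - 1/(n:ℝ)) :=
        hγ₀mono (by linarith)
      have e0 : γ₀ (a + 1/(n:ℝ)) - γ₀ (a + 1/(n:ℝ) - δ₂ - 1/(n:ℝ)) ≤ M₂ := by
        rw [hM₂]; linarith
      have e3 : (n:ℝ)*δ₂*(γ₀ (a + 1/(n:ℝ)) - γ₀ (a + 1/(n:ℝ) - δ₂ - 1/(n:ℝ)))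
          ≤ (n:ℝ)*M₂*δ₂ := by
        have h := mul_le_mul_of_nonneg_left e0 (mul_nonneg hnp.le hδ₂pos.le)
        nlinarith
      have e1 : (n:ℝ)*M₂*δ₂ ≤ 1/(4*(n:ℝ)) := by
        have h := mul_le_mul_of_nonneg_left hδ₂2 (mul_nonneg hnp.le (by linarith : (0:ℝ) ≤ M₂))
        have hid : (n:ℝ)*M₂*(1/(4*(n:ℝ)^2*M₂)) = 1/(4*(n:ℝ)) := by
          field_simp
        linarith [hid ▸ h]
      linarith
    have hkey2a := key2 n hn a
    have hq : 1/(2*(n:ℝ)) - 1/(4*(n:ℝ)) = 1/(4*(n:ℝ)) := by ring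
    have hws : s < γ n (a + 1/(n:ℝ) - δ₂) := by
      have h4 : (0:ℝ) < 1/(4*(n:ℝ)) := by positivity
      linarith
    have hw0 : 0 < a + 1/(n:ℝ) - δ₂ := by linarith
    have hbw : sInf A₁ ≤ a + 1/(n:ℝ) - δ₂ := csInf_le hA₁bdd ⟨hw0, hws⟩
    constructor
    · linarith
    · linarith
end
end

section
/- Let T > 0 and let α_n, β_n (n ≥ 1) and α₀, β₀ be càdlàg functions on [0,T] such that α_n → α₀ and β_n → β₀ in the Skorokhod J1 topology. Assume the following jump-cancellation property: for every n ≥ 0 and every t ∈ (0,T), if Δα_n(t) ≠ 0 then Δβ_n(t) = −Δα_n(t). Then α_n + β_n → α₀ + β₀ in the Skorokhod J1 topology. -/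
open Filter Set MeasureTheory Topology

noncomputable section

/-- A function `x : ℝ → ℝ` is càdlàg on `[0,T]`. -/
def Cadlag (T : ℝ) (x : ℝ → ℝ) : Prop :=
  (∀ t ∈ Set.Ico (0:ℝ) T, Filter.Tendsto x (nhdsWithin t (Set.Ici t)) (nhds (x t))) ∧
  (∀ t ∈ Set.Ioc (0:ℝ) T, ∃ L : ℝ, Filter.Tendsto x (nhdsWithin t (Set.Iio t)) (nhds L))

/-- The left limit `x(t−)`, with the convention `x(0−) := x(0)`. -/
def leftVal (x : ℝ → ℝ) (t : ℝ) : ℝ := if t ≤ 0 then x 0 else Function.leftLim x t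

/-- The jump `Δx(t) = x(t) − x(t−)` of a càdlàg path. -/
def jumpAt (x : ℝ → ℝ) (t : ℝ) : ℝ := x t - leftVal x t

/-- Convergence `xₙ → x₀` in the Skorokhod J1 topology on `D([0,T];ℝ)`. -/
def TendstoJ1 (T : ℝ) (x : ℕ → ℝ → ℝ) (x₀ : ℝ → ℝ) : Prop :=
  ∃ lam : ℕ → ℝ → ℝ,
    (∀ n, ContinuousOn (lam n) (Set.Icc 0 T) ∧ StrictMonoOn (lam n) (Set.Icc 0 T) ∧
      lam n 0 = 0 ∧ lam n T = T ∧ Set.MapsTo (lam n) (Set.Icc 0 T) (Set.Icc 0 T)) ∧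
    (∀ ε > (0:ℝ), ∃ N : ℕ, ∀ n ≥ N, ∀ t ∈ Set.Icc (0:ℝ) T,
      |lam n t - t| ≤ ε ∧ |x n (lam n t) - x₀ t| ≤ ε)

/-- Cadlag left limit: `leftLim` is the actual left limit. -/
lemma cadlag_tendsto_leftLim {T : ℝ} {x : ℝ → ℝ} (hx : Cadlag T x) {q : ℝ}
    (hq : q ∈ Set.Ioc (0:ℝ) T) :
    Filter.Tendsto x (nhdsWithin q (Set.Iio q)) (nhds (Function.leftLim x q)) := by
  obtain ⟨L, hL⟩ := hx.2 q hq
  rwa [leftLim_eq_of_tendsto hL]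

lemma jumpAt_eq {x : ℝ → ℝ} {q : ℝ} (hq : 0 < q) :
    jumpAt x q = x q - Function.leftLim x q := by
  simp [jumpAt, leftVal, not_le.2 hq]

/-- transport of left limits along a time change. -/
lemma tendsto_comp_left {T : ℝ} {φ : ℝ → ℝ}
    (hc : ContinuousOn φ (Set.Icc 0 T)) (hm : StrictMonoOn φ (Set.Icc 0 T))
    {u : ℝ} (hu : u ∈ Set.Ioc 0 T)
    {f : ℝ → ℝ} {L : ℝ} (hf : Filter.Tendsto f (nhdsWithin (φ u) (Set.Iio (φ u))) (nhds L)) :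
    Filter.Tendsto (fun t => f (φ t)) (nhdsWithin u (Set.Iio u)) (nhds L) := by
  have huI : u ∈ Set.Icc 0 T := ⟨hu.1.le, hu.2⟩
  have hIoo : Set.Ioo (0:ℝ) u ∈ 𝓝[<] u := Ioo_mem_nhdsLT hu.1
  have hsub : Set.Ioo (0:ℝ) u ⊆ Set.Icc 0 T := fun w hw => ⟨hw.1.le, hw.2.le.trans hu.2⟩
  have h1 : Filter.Tendsto φ (𝓝[<] u) (nhds (φ u)) :=
    (hc u huI).mono_left (nhdsWithin_le_of_mem (mem_of_superset hIoo hsub))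
  have h2 : ∀ᶠ w in 𝓝[<] u, φ w ∈ Set.Iio (φ u) :=
    mem_of_superset hIoo (fun w hw => hm (hsub hw) huI hw.2)
  exact hf.comp (tendsto_nhdsWithin_iff.2 ⟨h1, h2⟩)

/-- comparison of jumps under a time change with uniform closeness. -/
lemma jump_compare {T : ℝ} {φ f g : ℝ → ℝ}
    (hc : ContinuousOn φ (Set.Icc 0 T)) (hm : StrictMonoOn φ (Set.Icc 0 T))
    (h0 : φ 0 = 0) (hmap : Set.MapsTo φ (Set.Icc 0 T) (Set.Icc 0 T))
    (hf : Cadlag T f) (hg : Cadlag T g)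
    {u : ℝ} (hu : u ∈ Set.Ioc 0 T) {δ : ℝ}
    (h : ∀ w ∈ Set.Icc (0:ℝ) T, |f (φ w) - g w| ≤ δ) :
    |jumpAt f (φ u) - jumpAt g u| ≤ 2 * δ := by
  have h0T : (0:ℝ) ≤ T := hu.1.le.trans hu.2
  have huI : u ∈ Set.Icc 0 T := ⟨hu.1.le, hu.2⟩
  have h0I : (0:ℝ) ∈ Set.Icc (0:ℝ) T := ⟨le_refl _, h0T⟩
  have hφu : φ u ∈ Set.Ioc (0:ℝ) T := by
    refine ⟨?_, (hmap huI).2⟩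
    have := hm h0I huI hu.1
    rwa [h0] at this
  have hLf := cadlag_tendsto_leftLim hf hφu
  have hLg := cadlag_tendsto_leftLim hg hu
  have hLcomp : Filter.Tendsto (fun t => f (φ t)) (𝓝[<] u) (nhds (Function.leftLim f (φ u))) :=
    tendsto_comp_left hc hm hu hLf
  -- left limits are δ-close
  have hIoo : Set.Ioo (0:ℝ) u ∈ 𝓝[<] u := Ioo_mem_nhdsLT hu.1
  have hsub : Set.Ioo (0:ℝ) u ⊆ Set.Icc 0 T := fun w hw => ⟨hw.1.le, hw.2.le.trans hu.2⟩
  have hdist : |Function.leftLim f (φ u) - Function.leftLim g u| ≤ δ := by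
    have ht : Filter.Tendsto (fun t => |f (φ t) - g t|) (𝓝[<] u)
        (nhds (|Function.leftLim f (φ u) - Function.leftLim g u|)) :=
      (hLcomp.sub hLg).abs
    refine le_of_tendsto ht ?_
    exact mem_of_superset hIoo (fun w hw => h w (hsub hw))
  have hval : |f (φ u) - g u| ≤ δ := h u huI
  rw [jumpAt_eq hφu.1, jumpAt_eq hu.1]
  have : f (φ u) - Function.leftLim f (φ u) - (g u - Function.leftLim g u)
      = (f (φ u) - g u) - (Function.leftLim f (φ u) - Function.leftLim g u) := by ring
  rw [this]
  calc |(f (φ u) - g u) - (Function.leftLim f (φ u) - Function.leftLim g u)|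
      ≤ |f (φ u) - g u| + |Function.leftLim f (φ u) - Function.leftLim g u| := abs_sub _ _
    _ ≤ δ + δ := add_le_add hval hdist
    _ = 2 * δ := by ring

/-- left limit is close to values on approach interval. -/
lemma leftLim_close {T : ℝ} {g : ℝ → ℝ} (hg : Cadlag T g) {p q c ε : ℝ}
    (hpq : p < q) (hq : q ∈ Set.Ioc (0:ℝ) T)
    (h : ∀ w ∈ Set.Ioo p q, |g w - c| ≤ ε) :
    |Function.leftLim g q - c| ≤ ε := by
  have hL := cadlag_tendsto_leftLim hg hq
  have ht : Filter.Tendsto (fun w => |g w - c|) (𝓝[<] q)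
      (nhds (|Function.leftLim g q - c|)) := (hL.sub_const c).abs
  refine le_of_tendsto ht ?_
  exact mem_of_superset (Ioo_mem_nhdsLT hpq) h

/-- Existence of a partition adapted to two càdlàg functions. -/
lemma exists_partition {T ε : ℝ} (hT : 0 < T) (hε : 0 < ε) {x y : ℝ → ℝ}
    (hx : Cadlag T x) (hy : Cadlag T y) :
    ∃ m : ℕ, ∃ u : ℕ → ℝ, 0 < m ∧ u 0 = 0 ∧ u m = T ∧ (∀ i < m, u i < u (i + 1)) ∧
      (∀ i < m, ∀ s ∈ Set.Ico (u i) (u (i+1)), ∀ w ∈ Set.Ico (u i) (u (i+1)),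
        |x s - x w| ≤ ε ∧ |y s - y w| ≤ ε) := by
  set P : ℝ → Prop := fun r => ∃ m : ℕ, ∃ u : ℕ → ℝ, u 0 = 0 ∧ u m = r ∧
      (∀ i < m, u i < u (i + 1)) ∧
      (∀ i < m, ∀ s ∈ Set.Ico (u i) (u (i+1)), ∀ w ∈ Set.Ico (u i) (u (i+1)),
        |x s - x w| ≤ ε ∧ |y s - y w| ≤ ε) with hP
  set S : Set ℝ := {r | r ∈ Set.Icc (0:ℝ) T ∧ P r} with hS
  have h0S : (0:ℝ) ∈ S := by
    refine ⟨⟨le_refl _, hT.le⟩, 0, (fun _ => 0), rfl, rfl, ?_, ?_⟩ <;> intro i hi <;> omega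
  have hbdd : BddAbove S := ⟨T, fun r hr => hr.1.2⟩
  have hne : S.Nonempty := ⟨0, h0S⟩
  set r₀ : ℝ := sSup S with hr₀
  have hr₀0 : 0 ≤ r₀ := le_csSup hbdd h0S
  have hr₀T : r₀ ≤ T := csSup_le hne (fun r hr => hr.1.2)
  -- an extension principle: if P r, r < q, and osc of x,y on [r,q) is small, then P q
  have hext : ∀ r q : ℝ, P r → r < q →
      (∀ s ∈ Set.Ico r q, ∀ w ∈ Set.Ico r q, |x s - x w| ≤ ε ∧ |y s - y w| ≤ ε) → P q := by
    rintro r q ⟨m, u, hu0, hum, hmono, hosc⟩ hrq hosc'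
    refine ⟨m + 1, fun i => if i ≤ m then u i else q, by simp [hu0], by simp, ?_, ?_⟩
    · intro i hi
      rcases lt_or_ge i m with h | h
      · simp only [h.le, le_of_lt (Nat.lt_succ_of_lt h), if_pos, Nat.succ_le_of_lt h]
        simpa [h.le, Nat.succ_le_of_lt h] using hmono i h
      · have hi' : i = m := by omega
        subst hi'
        simp [hum, hrq, Nat.lt_irrefl]
    · intro i hi
      rcases lt_or_ge i m with h | h
      · simpa [h.le, Nat.succ_le_of_lt h] using hosc i h
      · have hi' : i = m := by omega
        subst hi'
        simpa [hum, Nat.lt_irrefl] using hosc'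
  -- Step 1 : r₀ ∈ S
  have hr₀S : r₀ ∈ S := by
    rcases eq_or_lt_of_le hr₀0 with h | h
    · rw [← h]; exact h0S
    · -- use left limits at r₀
      obtain ⟨Lx, hLx⟩ := hx.2 r₀ ⟨h, hr₀T⟩
      obtain ⟨Ly, hLy⟩ := hy.2 r₀ ⟨h, hr₀T⟩
      have hev : {w | |x w - Lx| ≤ ε / 2 ∧ |y w - Ly| ≤ ε / 2} ∈ 𝓝[<] r₀ := by
        filter_upwards [hLx.eventually (Metric.closedBall_mem_nhds (ε := ε/2) Lx (half_pos hε)),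
          hLy.eventually (Metric.closedBall_mem_nhds (ε := ε/2) Ly (half_pos hε))] with w h1 h2
        exact ⟨by simpa [Real.dist_eq] using h1, by simpa [Real.dist_eq] using h2⟩
      obtain ⟨l, hl, hsub⟩ := (mem_nhdsLT_iff_exists_Ioo_subset).1 hev
      have hl' : max l 0 < r₀ := max_lt hl h
      obtain ⟨r, hrS, hrl⟩ := exists_lt_of_lt_csSup hne hl'
      have hrr₀ : r ≤ r₀ := le_csSup hbdd hrS
      rcases eq_or_lt_of_le hrr₀ with heq | hlt
      · rwa [← heq]
      · refine ⟨⟨hr₀0, hr₀T⟩, hext r r₀ hrS.2 hlt ?_⟩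
        intro s hs w hw
        have hmem : ∀ z ∈ Set.Ico r r₀, z ∈ {w | |x w - Lx| ≤ ε / 2 ∧ |y w - Ly| ≤ ε / 2} := by
          intro z hz
          exact hsub ⟨lt_of_le_of_lt (le_max_left l 0) (lt_of_lt_of_le hrl hz.1), hz.2⟩
        obtain ⟨hs1, hs2⟩ := hmem s hs
        obtain ⟨hw1, hw2⟩ := hmem w hw
        constructor
        · calc |x s - x w| ≤ |x s - Lx| + |Lx - x w| := abs_sub_le _ _ _
            _ ≤ ε / 2 + ε / 2 := add_le_add hs1 (by rwa [abs_sub_comm])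
            _ = ε := by ring
        · calc |y s - y w| ≤ |y s - Ly| + |Ly - y w| := abs_sub_le _ _ _
            _ ≤ ε / 2 + ε / 2 := add_le_add hs2 (by rwa [abs_sub_comm])
            _ = ε := by ring
  -- Step 2 : r₀ = T
  have hr₀eqT : r₀ = T := by
    by_contra hne'
    have h : r₀ < T := lt_of_le_of_ne hr₀T hne'
    have hevx := (hx.1 r₀ ⟨hr₀0, h⟩).eventually (Metric.closedBall_mem_nhds (x r₀) (half_pos hε))
    have hevy := (hy.1 r₀ ⟨hr₀0, h⟩).eventually (Metric.closedBall_mem_nhds (y r₀) (half_pos hε))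
    have hev : {w | |x w - x r₀| ≤ ε / 2 ∧ |y w - y r₀| ≤ ε / 2} ∈ 𝓝[≥] r₀ := by
      filter_upwards [hevx, hevy] with w h1 h2
      exact ⟨by simpa [Real.dist_eq] using h1, by simpa [Real.dist_eq] using h2⟩
    obtain ⟨q', hq', hsub⟩ := (mem_nhdsGE_iff_exists_Ico_subset).1 hev
    set q : ℝ := min q' T with hq
    have hq1 : r₀ < q := lt_min hq' h
    have hPq : P q := by
      refine hext r₀ q hr₀S.2 hq1 ?_
      intro s hs w hw
      have hmem : ∀ z ∈ Set.Ico r₀ q, z ∈ {w | |x w - x r₀| ≤ ε / 2 ∧ |y w - y r₀| ≤ ε / 2} :=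
        fun z hz => hsub ⟨hz.1, lt_of_lt_of_le hz.2 (min_le_left _ _)⟩
      obtain ⟨hs1, hs2⟩ := hmem s hs
      obtain ⟨hw1, hw2⟩ := hmem w hw
      constructor
      · calc |x s - x w| ≤ |x s - x r₀| + |x r₀ - x w| := abs_sub_le _ _ _
          _ ≤ ε / 2 + ε / 2 := add_le_add hs1 (by rwa [abs_sub_comm])
          _ = ε := by ring
      · calc |y s - y w| ≤ |y s - y r₀| + |y r₀ - y w| := abs_sub_le _ _ _
          _ ≤ ε / 2 + ε / 2 := add_le_add hs2 (by rwa [abs_sub_comm])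
          _ = ε := by ring
    have hqS : q ∈ S := ⟨⟨hr₀0.trans hq1.le, min_le_right _ _⟩, hPq⟩
    exact absurd (le_csSup hbdd hqS) (not_le.2 hq1)
  obtain ⟨m, u, hu0, hum, hmono, hosc⟩ := hr₀S.2
  refine ⟨m, u, ?_, hu0, by rwa [← hr₀eqT], hmono, hosc⟩
  rcases Nat.eq_zero_or_pos m with h | h
  · subst h; rw [hu0] at hum; exact absurd (hum.trans hr₀eqT) (ne_of_lt hT)
  · exact h

lemma part_mono {u : ℕ → ℝ} {m : ℕ} (hmono : ∀ i < m, u i < u (i + 1)) :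
    ∀ {i j : ℕ}, i ≤ j → j ≤ m → u i ≤ u j := by
  intro i j hij hjm
  induction j with
  | zero => simp_all
  | succ k ih =>
    rcases Nat.eq_or_lt_of_le hij with h | h
    · rw [h]
    · exact le_trans (ih (by omega) (by omega)) (hmono k (by omega)).le

lemma part_locate {u : ℕ → ℝ} {m : ℕ} (hmono : ∀ i < m, u i < u (i + 1))
    (h0 : u 0 = 0) {t : ℝ} (ht0 : 0 ≤ t) (htm : t < u m) :
    ∃ j < m, u j ≤ t ∧ t < u (j + 1) := by
  classical
  set j := Nat.findGreatest (fun i => u i ≤ t) m with hj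
  have hP0 : u 0 ≤ t := by rw [h0]; exact ht0
  have hjle : u j ≤ t := Nat.findGreatest_spec (P := fun i => u i ≤ t) (Nat.zero_le m) hP0
  have hjm : j ≤ m := Nat.findGreatest_le m
  have hjne : j ≠ m := by
    intro h
    rw [h] at hjle
    exact absurd htm (not_lt.2 hjle)
  refine ⟨j, by omega, hjle, ?_⟩
  by_contra hc
  exact Nat.findGreatest_is_greatest (Nat.lt_succ_self j) (by omega) (not_lt.1 hc)

lemma part_gap {u : ℕ → ℝ} {m : ℕ} (hm : 0 < m) (hmono : ∀ i < m, u i < u (i + 1)) :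
    ∃ g > 0, ∀ i < m, g ≤ u (i + 1) - u i := by
  classical
  have hne : (Finset.range m).Nonempty := ⟨0, Finset.mem_range.2 hm⟩
  refine ⟨(Finset.range m).inf' hne (fun i => u (i + 1) - u i), ?_, ?_⟩
  · rw [gt_iff_lt, Finset.lt_inf'_iff]
    intro i hi
    have := hmono i (Finset.mem_range.1 hi)
    linarith
  · intro i hi
    exact Finset.inf'_le _ (Finset.mem_range.2 hi)

/-- distinct partition points are at least a gap apart, so a close one is equal. -/
lemma part_unique {u : ℕ → ℝ} {m : ℕ} {g : ℝ} (hmono : ∀ i < m, u i < u (i + 1))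
    (hgap : ∀ i < m, g ≤ u (i + 1) - u i) {i j : ℕ} (hi : i ≤ m) (hj : j ≤ m)
    (hclose : |u i - u j| < g) : i = j := by
  by_contra hne
  rcases Nat.lt_or_ge i j with h | h
  · have h1 : u (i + 1) ≤ u j := part_mono hmono (by omega) hj
    have h2 := hgap i (by omega)
    rw [abs_sub_comm, abs_of_nonneg (by linarith [part_mono hmono h.le hj] : 0 ≤ u j - u i)] at hclose
    linarith
  · have h : j < i := by omega
    have h1 : u (j + 1) ≤ u i := part_mono hmono (by omega) hi
    have h2 := hgap j (by omega)
    rw [abs_of_nonneg (by linarith [part_mono hmono h.le hi] : 0 ≤ u i - u j)] at hclose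
    linarith


lemma tc_surj {T : ℝ} {φ : ℝ → ℝ} (hc : ContinuousOn φ (Set.Icc 0 T))
    (h0 : φ 0 = 0) (hT' : φ T = T) (h0T : (0:ℝ) ≤ T) {y : ℝ} (hy : y ∈ Set.Icc (0:ℝ) T) :
    ∃ v ∈ Set.Icc (0:ℝ) T, φ v = y := by
  have h := intermediate_value_Icc h0T hc
  rw [h0, hT'] at h
  obtain ⟨v, hv, hvy⟩ := h hy
  exact ⟨v, hv, hvy⟩

/-- Rigidity: at a partition point where `a₀` has a big jump, the two time changes agree. -/
lemma rigidity {T ε₁ η g : ℝ} (hT : 0 < T) (hε : 0 < ε₁)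
    {an bn a₀ b₀ : ℝ → ℝ} (han : Cadlag T an) (hbn : Cadlag T bn)
    (ha₀ : Cadlag T a₀) (hb₀ : Cadlag T b₀)
    {lam mu : ℝ → ℝ}
    (hlc : ContinuousOn lam (Set.Icc 0 T)) (hlm : StrictMonoOn lam (Set.Icc 0 T))
    (hl0 : lam 0 = 0) (hlT : lam T = T) (hlmap : Set.MapsTo lam (Set.Icc 0 T) (Set.Icc 0 T))
    (hmc : ContinuousOn mu (Set.Icc 0 T)) (hmm : StrictMonoOn mu (Set.Icc 0 T))
    (hm0 : mu 0 = 0) (hmT : mu T = T) (hmmap : Set.MapsTo mu (Set.Icc 0 T) (Set.Icc 0 T))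
    (hcan : ∀ t ∈ Set.Ioo (0:ℝ) T, jumpAt an t ≠ 0 → jumpAt bn t = -jumpAt an t)
    (hA : ∀ w ∈ Set.Icc (0:ℝ) T, |an (lam w) - a₀ w| ≤ ε₁ / 8)
    (hB : ∀ w ∈ Set.Icc (0:ℝ) T, |bn (mu w) - b₀ w| ≤ ε₁ / 8)
    (hlid : ∀ w ∈ Set.Icc (0:ℝ) T, |lam w - w| ≤ η)
    (hmid : ∀ w ∈ Set.Icc (0:ℝ) T, |mu w - w| ≤ η)
    {m : ℕ} {u : ℕ → ℝ} (hm : 0 < m) (hu0 : u 0 = 0) (hum : u m = T)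
    (hmono : ∀ i < m, u i < u (i + 1))
    (hosc : ∀ i < m, ∀ s ∈ Set.Ico (u i) (u (i+1)), ∀ w ∈ Set.Ico (u i) (u (i+1)),
        |a₀ s - a₀ w| ≤ ε₁ ∧ |b₀ s - b₀ w| ≤ ε₁)
    (hg : 0 < g) (hgap : ∀ i < m, g ≤ u (i + 1) - u i) (hηg : 2 * η < g)
    {k : ℕ} (hk1 : 1 ≤ k) (hkm : k < m)
    (hbig : 2 * ε₁ < |jumpAt a₀ (u k)|) :
    lam (u k) = mu (u k) := by
  have h0T : (0:ℝ) ≤ T := hT.le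
  set uk : ℝ := u k with huk
  have hukIoo : uk ∈ Set.Ioo (0:ℝ) T := by
    constructor
    · rw [← hu0]
      calc u 0 < u 1 := hmono 0 hm
        _ ≤ u k := part_mono hmono hk1 (le_of_lt hkm)
    · rw [← hum]
      calc u k < u (k + 1) := hmono k hkm
        _ ≤ u m := part_mono hmono (by omega) (le_refl m)
  have hukIcc : uk ∈ Set.Icc (0:ℝ) T := ⟨hukIoo.1.le, hukIoo.2.le⟩
  have hukIoc : uk ∈ Set.Ioc (0:ℝ) T := ⟨hukIoo.1, hukIoo.2.le⟩
  have h0I : (0:ℝ) ∈ Set.Icc (0:ℝ) T := ⟨le_refl _, h0T⟩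
  have hTI : T ∈ Set.Icc (0:ℝ) T := ⟨h0T, le_refl _⟩
  set s : ℝ := lam uk with hs
  have hsIoo : s ∈ Set.Ioo (0:ℝ) T := by
    constructor
    · have := hlm h0I hukIcc hukIoo.1; rwa [hl0] at this
    · have := hlm hukIcc hTI hukIoo.2; rwa [hlT] at this
  -- jump comparison for a
  have hja : |jumpAt an s - jumpAt a₀ uk| ≤ 2 * (ε₁ / 8) :=
    jump_compare hlc hlm hl0 hlmap han ha₀ hukIoc hA
  have hjan : |jumpAt an s| > 2 * ε₁ - ε₁ / 4 := by
    have h1 : |jumpAt a₀ uk| - |jumpAt an s| ≤ ε₁ / 4 := by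
      calc |jumpAt a₀ uk| - |jumpAt an s| ≤ |jumpAt an s - jumpAt a₀ uk| := by
            rw [abs_sub_comm]; exact abs_sub_abs_le_abs_sub _ _
        _ ≤ ε₁ / 4 := by linarith
    linarith
  have hjanne : jumpAt an s ≠ 0 := by
    intro h; rw [h, abs_zero] at hjan; linarith
  have hjbn : jumpAt bn s = -jumpAt an s := hcan s hsIoo hjanne
  have hjbnabs : |jumpAt bn s| > 2 * ε₁ - ε₁ / 4 := by rwa [hjbn, abs_neg]
  -- find v with mu v = s
  obtain ⟨v, hvIcc, hv⟩ := tc_surj hmc hm0 hmT h0T ⟨hsIoo.1.le, hsIoo.2.le⟩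
  have hv0 : 0 < v := by
    rcases eq_or_lt_of_le hvIcc.1 with h | h
    · exfalso; rw [← h, hm0] at hv; exact absurd hv.symm (ne_of_gt hsIoo.1)
    · exact h
  have hvIoc : v ∈ Set.Ioc (0:ℝ) T := ⟨hv0, hvIcc.2⟩
  -- jump comparison for b
  have hjb : |jumpAt bn (mu v) - jumpAt b₀ v| ≤ 2 * (ε₁ / 8) :=
    jump_compare hmc hmm hm0 hmmap hbn hb₀ hvIoc hB
  rw [hv] at hjb
  have hjb₀ : |jumpAt b₀ v| > ε₁ := by
    have h1 : |jumpAt bn s| - |jumpAt b₀ v| ≤ ε₁ / 4 := by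
      calc |jumpAt bn s| - |jumpAt b₀ v| ≤ |jumpAt bn s - jumpAt b₀ v| := abs_sub_abs_le_abs_sub _ _
        _ ≤ ε₁ / 4 := by linarith
    linarith
  -- v is close to uk
  have hvclose : |v - uk| < g := by
    have h1 : |mu v - v| ≤ η := hmid v hvIcc
    have h2 : |s - uk| ≤ η := hlid uk hukIcc
    rw [hv] at h1
    calc |v - uk| = |(v - s) + (s - uk)| := by ring_nf
      _ ≤ |v - s| + |s - uk| := abs_add_le _ _
      _ ≤ η + η := add_le_add (by rwa [abs_sub_comm]) h2
      _ < g := by linarith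
  -- v is a partition point
  have hvT : v < T := by
    have : v ≤ uk + |v - uk| := by
      have := le_abs_self (v - uk); linarith
    have h2 : uk + g ≤ T := by
      have h3 := hgap k hkm
      have h4 : u (k+1) ≤ u m := part_mono hmono (by omega) (le_refl m)
      rw [hum] at h4; linarith
    linarith
  obtain ⟨j, hjm, hjv, hjv'⟩ := part_locate hmono hu0 hvIcc.1 (by rwa [hum])
  rcases eq_or_lt_of_le hjv with heq | hlt
  · -- v = u j, hence j = k and we are done
    have hjk : j = k := by
      refine part_unique hmono hgap (le_of_lt hjm) (le_of_lt hkm) ?_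
      rw [heq]; exact hvclose
    rw [← hv, ← heq, hjk]
  · -- v interior to an oscillation interval: small jump, contradiction
    exfalso
    have hjump_small : |jumpAt b₀ v| ≤ ε₁ := by
      rw [jumpAt_eq hv0]
      have : |Function.leftLim b₀ v - b₀ v| ≤ ε₁ := by
        refine leftLim_close hb₀ hlt hvIoc ?_
        intro w hw
        exact (hosc j hjm w ⟨hw.1.le, hw.2.trans hjv'⟩ v ⟨hjv, hjv'⟩).2
      rwa [abs_sub_comm] at this
    linarith

/-- allowed cancellation of jumps for J1. If `αₙ → α₀` and `βₙ → β₀` in J1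
and for every `n ≥ 0` (including the limits) every jump of `αₙ` in `(0,T)` is exactly
cancelled by the jump of `βₙ`, then `αₙ + βₙ → α₀ + β₀` in J1. -/
theorem J1_addition_with_jump_cancellation
    (T : ℝ) (hT : 0 < T)
    (a b : ℕ → ℝ → ℝ) (a₀ b₀ : ℝ → ℝ)
    (ha : ∀ n, Cadlag T (a n)) (hb : ∀ n, Cadlag T (b n))
    (ha₀ : Cadlag T a₀) (hb₀ : Cadlag T b₀)
    (haconv : TendstoJ1 T a a₀) (hbconv : TendstoJ1 T b b₀)
    (hcancel : ∀ n, ∀ t ∈ Set.Ioo (0:ℝ) T,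
      jumpAt (a n) t ≠ 0 → jumpAt (b n) t = -jumpAt (a n) t)
    (hcancel₀ : ∀ t ∈ Set.Ioo (0:ℝ) T,
      jumpAt a₀ t ≠ 0 → jumpAt b₀ t = -jumpAt a₀ t) :
    TendstoJ1 T (fun n s => a n s + b n s) (fun s => a₀ s + b₀ s) := by
  obtain ⟨lamA, hlamA, hAc⟩ := haconv
  obtain ⟨lamB, hlamB, hBc⟩ := hbconv
  refine ⟨lamB, hlamB, ?_⟩
  intro ε hε
  have hε₁ : (0:ℝ) < ε / 8 := by linarith
  obtain ⟨m, u, hm, hu0, hum, hmono, hosc⟩ := exists_partition hT hε₁ ha₀ hb₀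
  obtain ⟨g, hg, hgap⟩ := part_gap hm hmono
  set ε₁ : ℝ := ε / 8 with hε₁def
  set ε₂ : ℝ := min (ε₁ / 8) (min (g / 8) ε) with hε₂def
  have hε₂pos : 0 < ε₂ := lt_min (by linarith) (lt_min (by linarith) hε)
  have hε₂ε₁ : ε₂ ≤ ε₁ / 8 := min_le_left _ _
  have hε₂g : ε₂ ≤ g / 8 := le_trans (min_le_right _ _) (min_le_left _ _)
  have hε₂ε : ε₂ ≤ ε := le_trans (min_le_right _ _) (min_le_right _ _)
  obtain ⟨N₁, hN₁⟩ := hAc ε₂ hε₂pos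
  obtain ⟨N₂, hN₂⟩ := hBc ε₂ hε₂pos
  refine ⟨max N₁ N₂, ?_⟩
  intro n hn t ht
  have hA' : ∀ w ∈ Set.Icc (0:ℝ) T, |lamA n w - w| ≤ ε₂ ∧ |a n (lamA n w) - a₀ w| ≤ ε₂ :=
    fun w hw => hN₁ n (le_trans (le_max_left _ _) hn) w hw
  have hB' : ∀ w ∈ Set.Icc (0:ℝ) T, |lamB n w - w| ≤ ε₂ ∧ |b n (lamB n w) - b₀ w| ≤ ε₂ :=
    fun w hw => hN₂ n (le_trans (le_max_right _ _) hn) w hw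
  obtain ⟨hlc, hlm, hl0, hlT, hlmap⟩ := hlamA n
  obtain ⟨hmc, hmm, hm0, hmT, hmmap⟩ := hlamB n
  refine ⟨le_trans (hB' t ht).1 hε₂ε, ?_⟩
  have hbpart : |b n (lamB n t) - b₀ t| ≤ ε₂ := (hB' t ht).2
  have hapart : |a n (lamB n t) - a₀ t| ≤ ε₂ + 4 * ε₁ := by
    rcases eq_or_lt_of_le ht.2 with hteq | htlt
    · -- t = T
      subst hteq
      have h2 : lamA n t = t := hlT
      have := (hA' t ht).2
      rw [h2] at this
      rw [hmT]
      calc |a n t - a₀ t| ≤ ε₂ := this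
        _ ≤ ε₂ + 4 * ε₁ := by linarith
    · -- t < T : find t' with lamA n t' = lamB n t
      obtain ⟨t', ht'Icc, ht'⟩ := tc_surj hlc hl0 hlT hT.le (hmmap ht)
      have hat' : |a n (lamB n t) - a₀ t'| ≤ ε₂ := by
        rw [← ht']; exact (hA' t' ht'Icc).2
      have ht'close : |t' - t| ≤ 2 * ε₂ := by
        have h1 : |lamA n t' - t'| ≤ ε₂ := (hA' t' ht'Icc).1
        have h2 : |lamB n t - t| ≤ ε₂ := (hB' t ht).1
        rw [ht'] at h1
        calc |t' - t| = |(t' - lamB n t) + (lamB n t - t)| := by ring_nf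
          _ ≤ |t' - lamB n t| + |lamB n t - t| := abs_add_le _ _
          _ ≤ ε₂ + ε₂ := add_le_add (by rwa [abs_sub_comm]) h2
          _ = 2 * ε₂ := by ring
      have humem : ∀ i ≤ m, u i ∈ Set.Icc (0:ℝ) T := by
        intro i hi
        constructor
        · rw [← hu0]; exact part_mono hmono (Nat.zero_le i) hi
        · rw [← hum]; exact part_mono hmono hi (le_refl m)
      obtain ⟨i, him, hit, hit'⟩ := part_locate hmono hu0 ht.1 (by rwa [hum])
      have hrig : ∀ k, 1 ≤ k → k < m → 2 * ε₁ < |jumpAt a₀ (u k)| →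
          lamA n (u k) = lamB n (u k) := by
        intro k hk1 hkm hbig
        refine rigidity hT hε₁ (ha n) (hb n) ha₀ hb₀ hlc hlm hl0 hlT hlmap
          hmc hmm hm0 hmT hmmap (hcancel n)
          (fun w hw => le_trans (hA' w hw).2 hε₂ε₁)
          (fun w hw => le_trans (hB' w hw).2 hε₂ε₁)
          (fun w hw => (hA' w hw).1) (fun w hw => (hB' w hw).1)
          hm hu0 hum hmono hosc hg hgap (by linarith) hk1 hkm hbig
      have hupos : ∀ k, 1 ≤ k → k ≤ m → 0 < u k := by
        intro k h1 h2
        rw [← hu0]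
        calc u 0 < u 1 := hmono 0 hm
          _ ≤ u k := part_mono hmono h1 h2
      have hkey : |a₀ t' - a₀ t| ≤ 4 * ε₁ := by
        rcases lt_or_ge t' (u i) with hcase | hcase
        · -- t' below the interval of t
          have hi1 : 1 ≤ i := by
            by_contra h
            have : i = 0 := by omega
            subst this
            rw [hu0] at hcase
            exact absurd hcase (not_lt.2 ht'Icc.1)
          have hnotbig : ¬ (2 * ε₁ < |jumpAt a₀ (u i)|) := by
            intro hbig
            have heq := hrig i hi1 him hbig
            have h1 : lamB n (u i) ≤ lamB n t :=
              hmm.monotoneOn (humem i (le_of_lt him)) ht hit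
            rw [← heq, ← ht'] at h1
            have h2 : u i ≤ t' := by
              by_contra h2
              exact absurd h1 (not_le.2 (hlm ht'Icc (humem i (le_of_lt him)) (not_le.1 h2)))
            exact absurd hcase (not_lt.2 h2)
          have hjsmall : |jumpAt a₀ (u i)| ≤ 2 * ε₁ := not_lt.1 hnotbig
          obtain ⟨j, rfl⟩ : ∃ j, i = j + 1 := ⟨i - 1, by omega⟩
          have hui0 : 0 < u (j + 1) := hupos (j+1) hi1 (le_of_lt him)
          have ht'lo : u j ≤ t' := by
            have h1 : g ≤ u (j+1) - u j := hgap j (by omega)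
            have h2 := (abs_le.1 ht'close).1
            have h3 : t ≥ u (j+1) := hit
            have h4 : 2 * ε₂ ≤ g / 4 := by linarith
            linarith
          have hLL : |Function.leftLim a₀ (u (j+1)) - a₀ t'| ≤ ε₁ := by
            refine leftLim_close ha₀ (hmono j (by omega) : u j < u (j+1))
              ⟨hui0, (humem (j+1) (le_of_lt him)).2⟩ ?_
            intro w hw
            exact (hosc j (by omega) w ⟨hw.1.le, hw.2⟩ t' ⟨ht'lo, hcase⟩).1
          have hval : |a₀ (u (j+1)) - a₀ t| ≤ ε₁ :=
            (hosc (j+1) him (u (j+1)) ⟨le_refl _, hmono (j+1) him⟩ t ⟨hit, hit'⟩).1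
          have hjeq : |a₀ (u (j+1)) - Function.leftLim a₀ (u (j+1))| ≤ 2 * ε₁ := by
            rw [← jumpAt_eq hui0]; exact hjsmall
          calc |a₀ t' - a₀ t|
              = |-(a₀ (u (j+1)) - Function.leftLim a₀ (u (j+1)))
                + -(Function.leftLim a₀ (u (j+1)) - a₀ t')
                + (a₀ (u (j+1)) - a₀ t)| := by congr 1; ring
            _ ≤ |-(a₀ (u (j+1)) - Function.leftLim a₀ (u (j+1)))
                + -(Function.leftLim a₀ (u (j+1)) - a₀ t')|
                + |a₀ (u (j+1)) - a₀ t| := abs_add_le _ _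
            _ ≤ |-(a₀ (u (j+1)) - Function.leftLim a₀ (u (j+1)))|
                + |-(Function.leftLim a₀ (u (j+1)) - a₀ t')|
                + |a₀ (u (j+1)) - a₀ t| := add_le_add (abs_add_le _ _) (le_refl _)
            _ ≤ 2 * ε₁ + ε₁ + ε₁ := by
                  rw [abs_neg, abs_neg]
                  exact add_le_add (add_le_add hjeq hLL) hval
            _ = 4 * ε₁ := by ring
        · rcases lt_or_ge t' (u (i+1)) with hcase' | hcase'
          · -- same interval
            exact le_trans (hosc i him t' ⟨hcase, hcase'⟩ t ⟨hit, hit'⟩).1 (by linarith)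
          · -- t' above the interval of t
            have hi1m : i + 1 < m := by
              by_contra h
              have him' : i + 1 = m := by omega
              have hTm : T = u (i+1) := by rw [him', hum]
              have h1 : t' = T := le_antisymm ht'Icc.2 (by rw [hTm]; exact hcase')
              rw [h1, hlT] at ht'
              have hTmem : T ∈ Set.Icc (0:ℝ) T := ⟨hT.le, le_refl _⟩
              have : t = T := hmm.injOn ht hTmem (by rw [hmT, ← ht'])
              exact absurd this (ne_of_lt htlt)
            have hnotbig : ¬ (2 * ε₁ < |jumpAt a₀ (u (i+1))|) := by
              intro hbig
              have heq := hrig (i+1) (by omega) hi1m hbig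
              have h1 : lamB n t < lamB n (u (i+1)) :=
                hmm ht (humem (i+1) (le_of_lt hi1m)) hit'
              rw [← heq, ← ht'] at h1
              have h2 : t' < u (i+1) := by
                by_contra h2
                exact absurd h1 (not_lt.2
                  (hlm.monotoneOn (humem (i+1) (le_of_lt hi1m)) ht'Icc (not_lt.1 h2)))
              exact absurd h2 (not_lt.2 hcase')
            have hjsmall : |jumpAt a₀ (u (i+1))| ≤ 2 * ε₁ := not_lt.1 hnotbig
            have hui0 : 0 < u (i + 1) := hupos (i+1) (by omega) (le_of_lt hi1m)
            have ht'hi : t' < u (i + 2) := by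
              have h1 : g ≤ u (i+2) - u (i+1) := hgap (i+1) hi1m
              have h2 := (abs_le.1 ht'close).2
              have h3 : t < u (i+1) := hit'
              have h4 : 2 * ε₂ ≤ g / 4 := by linarith
              linarith
            have hLL : |Function.leftLim a₀ (u (i+1)) - a₀ t| ≤ ε₁ := by
              refine leftLim_close ha₀ (hmono i him)
                ⟨hui0, (humem (i+1) (le_of_lt hi1m)).2⟩ ?_
              intro w hw
              exact (hosc i him w ⟨hw.1.le, hw.2⟩ t ⟨hit, hit'⟩).1
            have hval : |a₀ t' - a₀ (u (i+1))| ≤ ε₁ :=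
              (hosc (i+1) hi1m t' ⟨hcase', ht'hi⟩ (u (i+1))
                ⟨le_refl _, hmono (i+1) hi1m⟩).1
            have hjeq : |a₀ (u (i+1)) - Function.leftLim a₀ (u (i+1))| ≤ 2 * ε₁ := by
              rw [← jumpAt_eq hui0]; exact hjsmall
            calc |a₀ t' - a₀ t|
                = |(a₀ t' - a₀ (u (i+1)))
                  + (a₀ (u (i+1)) - Function.leftLim a₀ (u (i+1)))
                  + (Function.leftLim a₀ (u (i+1)) - a₀ t)| := by congr 1; ring
              _ ≤ |(a₀ t' - a₀ (u (i+1)))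
                  + (a₀ (u (i+1)) - Function.leftLim a₀ (u (i+1)))|
                  + |Function.leftLim a₀ (u (i+1)) - a₀ t| := abs_add_le _ _
              _ ≤ |a₀ t' - a₀ (u (i+1))|
                  + |a₀ (u (i+1)) - Function.leftLim a₀ (u (i+1))|
                  + |Function.leftLim a₀ (u (i+1)) - a₀ t| :=
                    add_le_add (abs_add_le _ _) (le_refl _)
              _ ≤ ε₁ + 2 * ε₁ + ε₁ := add_le_add (add_le_add hval hjeq) hLL
              _ = 4 * ε₁ := by ring
      calc |a n (lamB n t) - a₀ t|
          = |(a n (lamB n t) - a₀ t') + (a₀ t' - a₀ t)| := by congr 1; ring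
        _ ≤ |a n (lamB n t) - a₀ t'| + |a₀ t' - a₀ t| := abs_add_le _ _
        _ ≤ ε₂ + 4 * ε₁ := add_le_add hat' hkey
  show |a n (lamB n t) + b n (lamB n t) - (a₀ t + b₀ t)| ≤ ε
  calc |a n (lamB n t) + b n (lamB n t) - (a₀ t + b₀ t)|
      = |(a n (lamB n t) - a₀ t) + (b n (lamB n t) - b₀ t)| := by congr 1; ring
    _ ≤ |a n (lamB n t) - a₀ t| + |b n (lamB n t) - b₀ t| := abs_add_le _ _
    _ ≤ (ε₂ + 4 * ε₁) + ε₂ := add_le_add hapart hbpart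
    _ ≤ ε := by
        rw [hε₁def] at hε₂ε₁ ⊢
        linarith
end
end

section
/- Let T > 0 and let α, β, β_n (n ≥ 1) : [0,T] → ℝ be càdlàg with Σ_{t ∈ (0,T], Δα(t) ≠ 0} (Δα(t))² < ∞ (the sum over the countable set of jump times of α). Assume the β_n are uniformly bounded (there is K with |β_n(t)| ≤ K for all n, t) and that β_n(t) → β(t) as n → ∞ for every t ∈ (0,T] with Δα(t) ≠ 0. Let G : ℝ × ℝ → ℝ be twice continuously differentiable such that for every compact interval I ⊂ ℝ there exists L ≥ 0 with |G_{xx}(x,y) − G_{xx}(x,z)| ≤ L·|y − z| for all x, y, z ∈ I, where G_x and G_{xx} denote the first and second partial derivatives of G in its first argument. Define, for a bounded γ : [0,T] → ℝ, J(α,γ)(t) := Σ_{u ∈ (0,t], Δα(u) ≠ 0} [ G(α(u), γ(u)) − G(α(u−), γ(u)) − G_x(α(u−), γ(u))·Δα(u) ]. Then all these sums converge absolutely, and sup_{t∈[0,T]} |J(α,β_n)(t) − J(α,β)(t)| → 0 as n → ∞. -/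
open Filter Set MeasureTheory Topology

noncomputable section

private lemma aux_lip (f f' : ℝ → ℝ) (hf : ∀ x, HasDerivAt f (f' x) x)
    (x₀ x₁ M : ℝ) (hM : ∀ x ∈ Set.uIcc x₀ x₁, |f' x| ≤ M) :
    |f x₁ - f x₀| ≤ M * |x₁ - x₀| := by
  have h := (convex_uIcc x₀ x₁).norm_image_sub_le_of_norm_hasDerivWithin_le
    (fun x _ => (hf x).hasDerivWithinAt)
    (fun x hx => by simpa [Real.norm_eq_abs] using hM x hx)
    Set.left_mem_uIcc Set.right_mem_uIcc
  simpa [Real.norm_eq_abs] using h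

private lemma aux_taylor (f f' : ℝ → ℝ) (hf : ∀ x, HasDerivAt f (f' x) x)
    (x₀ x₁ M : ℝ) (hM : ∀ x ∈ Set.uIcc x₀ x₁, |f' x - f' x₀| ≤ M) :
    |f x₁ - f x₀ - f' x₀ * (x₁ - x₀)| ≤ M * |x₁ - x₀| := by
  have hd : ∀ x, HasDerivAt (fun x => f x - f' x₀ * x) (f' x - f' x₀) x := by
    intro x
    have h1 := (hf x).sub ((hasDerivAt_id' x).const_mul (f' x₀))
    rw [mul_one] at h1
    exact h1
  have h := aux_lip (fun x => f x - f' x₀ * x) (fun x => f' x - f' x₀) hd x₀ x₁ M hM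
  have e : f x₁ - f' x₀ * x₁ - (f x₀ - f' x₀ * x₀) = f x₁ - f x₀ - f' x₀ * (x₁ - x₀) := by ring
  rwa [e] at h

private lemma cadlag_bdd {T : ℝ} {a : ℝ → ℝ} (ha : Cadlag T a) :
    ∃ C : ℝ, ∀ s ∈ Set.Icc (0:ℝ) T, |a s| ≤ C := by
  have key : ∀ t ∈ Set.Icc (0:ℝ) T, ∃ M : ℝ, ∃ U : Set ℝ, U ∈ 𝓝 t ∧
      ∀ s ∈ U ∩ Set.Icc (0:ℝ) T, |a s| ≤ M := by
    intro t ht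
    obtain ⟨v, hv, hright⟩ : ∃ v, t < v ∧
        ∀ s ∈ Set.Ico t v ∩ Set.Icc (0:ℝ) T, |a s| ≤ |a t| + 1 := by
      rcases eq_or_lt_of_le ht.2 with h | h
      · refine ⟨T + 1, by linarith, fun s hs => ?_⟩
        have hst : s = t := le_antisymm (h ▸ hs.2.2) hs.1.1
        rw [hst]
        linarith [abs_nonneg (a t)]
      · have h1 := ha.1 t ⟨ht.1, h⟩
        have h2 : {s | a s ∈ Set.Ioo (a t - 1) (a t + 1)} ∈ 𝓝[≥] t :=
          h1 (Ioo_mem_nhds (by linarith) (by linarith))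
        rw [mem_nhdsGE_iff_exists_Ico_subset] at h2
        obtain ⟨v, hv, hsub⟩ := h2
        refine ⟨v, hv, fun s hs => ?_⟩
        have h3 : a s ∈ Set.Ioo (a t - 1) (a t + 1) := hsub hs.1
        exact abs_le.mpr ⟨by linarith [neg_abs_le (a t), h3.1],
          by linarith [le_abs_self (a t), h3.2]⟩
    obtain ⟨u, hu, Ml, hleft⟩ : ∃ u, u < t ∧ ∃ Ml : ℝ,
        ∀ s ∈ Set.Ioo u t ∩ Set.Icc (0:ℝ) T, |a s| ≤ Ml := by
      rcases le_or_gt t 0 with h | h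
      · exact ⟨t - 1, by linarith, 0, fun s hs =>
          absurd (lt_of_lt_of_le hs.1.2 h) (not_lt.mpr hs.2.1)⟩
      · obtain ⟨Lt, hLt⟩ := ha.2 t ⟨h, ht.2⟩
        have h2 : {s | a s ∈ Set.Ioo (Lt - 1) (Lt + 1)} ∈ 𝓝[<] t :=
          hLt (Ioo_mem_nhds (by linarith) (by linarith))
        rw [mem_nhdsLT_iff_exists_Ioo_subset] at h2
        obtain ⟨u, hu, hsub⟩ := h2
        refine ⟨u, hu, |Lt| + 1, fun s hs => ?_⟩
        have h3 : a s ∈ Set.Ioo (Lt - 1) (Lt + 1) := hsub hs.1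
        exact abs_le.mpr ⟨by linarith [neg_abs_le Lt, h3.1],
          by linarith [le_abs_self Lt, h3.2]⟩
    refine ⟨max (|a t| + 1) Ml, Set.Ioo u v, Ioo_mem_nhds hu hv, fun s hs => ?_⟩
    rcases lt_or_ge s t with h | h
    · exact le_trans (hleft s ⟨⟨hs.1.1, h⟩, hs.2⟩) (le_max_right _ _)
    · exact le_trans (hright s ⟨⟨h, hs.1.2⟩, hs.2⟩) (le_max_left _ _)
  choose! M U hU hUb using key
  obtain ⟨F, hFmem, hFcov⟩ := isCompact_Icc.elim_nhds_subcover U (fun t ht => hU t ht)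
  refine ⟨∑ x ∈ F, |M x|, fun s hs => ?_⟩
  obtain ⟨x, hxF, hxU⟩ : ∃ x ∈ F, s ∈ U x := by simpa using hFcov hs
  calc |a s| ≤ M x := hUb x (hFmem x hxF) s ⟨hxU, hs⟩
    _ ≤ |M x| := le_abs_self _
    _ ≤ ∑ y ∈ F, |M y| :=
      Finset.single_le_sum (f := fun y => |M y|) (fun i _ => abs_nonneg _) hxF

/-- uniform convergence of the jump-sum functional
`J(α,γ)(t) = Σ_{u ≤ t} [G(α(u),γ(u)) − G(α(u−),γ(u)) − G_x(α(u−),γ(u))·Δα(u)]`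
along a uniformly bounded sequence `βₙ` converging pointwise to `β` at the jump times
of `α`, for `α` with square-summable jumps and `G ∈ C²` whose second partial `G_{xx}`
in the first variable is Lipschitz in the second variable on compacts;
the sums converge absolutely and `sup_{[0,T]} |J(α,βₙ) − J(α,β)| → 0`. -/
theorem jump_sum_uniform_convergence
    (T : ℝ) (hT : 0 < T)
    (a : ℝ → ℝ) (b : ℕ → ℝ → ℝ) (b₀ : ℝ → ℝ)
    (ha : Cadlag T a) (hb : ∀ n, Cadlag T (b n)) (hb₀ : Cadlag T b₀)
    (hsum : Summable fun u : Set.Ioc (0:ℝ) T => (jumpAt a u) ^ 2)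
    (K : ℝ) (hbd : ∀ n, ∀ t ∈ Set.Icc (0:ℝ) T, |b n t| ≤ K)
    (hconv : ∀ t ∈ Set.Ioc (0:ℝ) T, jumpAt a t ≠ 0 →
      Filter.Tendsto (fun n => b n t) Filter.atTop (nhds (b₀ t)))
    (G Gx Gxx : ℝ → ℝ → ℝ)
    (hG : ContDiff ℝ 2 fun pt : ℝ × ℝ => G pt.1 pt.2)
    (hGx : ∀ x y : ℝ, HasDerivAt (fun x' => G x' y) (Gx x y) x)
    (hGxx : ∀ x y : ℝ, HasDerivAt (fun x' => Gx x' y) (Gxx x y) x)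
    (hLip : ∀ A B : ℝ, ∃ L : ℝ, 0 ≤ L ∧ ∀ x ∈ Set.Icc A B, ∀ y ∈ Set.Icc A B,
      ∀ z ∈ Set.Icc A B, |Gxx x y - Gxx x z| ≤ L * |y - z|) :
    (∀ n, Summable fun u : Set.Ioc (0:ℝ) T =>
      G (a u) (b n u) - G (leftVal a u) (b n u) - Gx (leftVal a u) (b n u) * jumpAt a u) ∧
    (Summable fun u : Set.Ioc (0:ℝ) T =>
      G (a u) (b₀ u) - G (leftVal a u) (b₀ u) - Gx (leftVal a u) (b₀ u) * jumpAt a u) ∧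
    (∀ ε > (0:ℝ), ∃ N : ℕ, ∀ n ≥ N, ∀ t ∈ Set.Icc (0:ℝ) T,
      |(∑' u : Set.Ioc (0:ℝ) T, if (u : ℝ) ≤ t then
            G (a u) (b n u) - G (leftVal a u) (b n u)
              - Gx (leftVal a u) (b n u) * jumpAt a u
          else 0)
        - (∑' u : Set.Ioc (0:ℝ) T, if (u : ℝ) ≤ t then
            G (a u) (b₀ u) - G (leftVal a u) (b₀ u)
              - Gx (leftVal a u) (b₀ u) * jumpAt a u
          else 0)| ≤ ε) := by
  classical
  -- boundedness of `a` and its left limits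
  obtain ⟨C, hC⟩ := cadlag_bdd ha
  have hCnn : 0 ≤ C := le_trans (abs_nonneg _) (hC 0 ⟨le_refl 0, hT.le⟩)
  have hKnn : 0 ≤ K := le_trans (abs_nonneg _) (hbd 0 0 ⟨le_refl 0, hT.le⟩)
  have hCleft : ∀ u ∈ Set.Ioc (0:ℝ) T, |leftVal a u| ≤ C := by
    intro u hu
    obtain ⟨Lt, hLt⟩ := ha.2 u hu
    have hne : (𝓝[<] (u:ℝ)).NeBot := inferInstance
    have hl : leftVal a u = Lt := by
      rw [leftVal, if_neg (not_le.mpr hu.1)]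
      exact leftLim_eq_of_tendsto hLt
    rw [hl]
    have hev : ∀ᶠ s in 𝓝[<] u, |a s| ≤ C := by
      filter_upwards [Ioo_mem_nhdsLT hu.1] with s hs
      exact hC s ⟨hs.1.le, hs.2.le.trans hu.2⟩
    exact le_of_tendsto ((continuous_abs.tendsto Lt).comp hLt) hev
  -- continuity of Gxx
  have hGxxc : Continuous fun p : ℝ × ℝ => Gxx p.1 p.2 := by
    set Guc : ℝ × ℝ → ℝ := fun p => G p.1 p.2 with hGuc
    have hGd : Differentiable ℝ Guc := hG.differentiable (by norm_num)
    have hGx_eq : ∀ x y : ℝ, Gx x y = fderiv ℝ Guc (x, y) (1, 0) := by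
      intro x y
      have h3 : HasDerivAt (fun x' : ℝ => (x', y)) ((1:ℝ), (0:ℝ)) x :=
        (hasDerivAt_id x).prodMk (hasDerivAt_const x y)
      have h1 : HasDerivAt (fun x' => Guc (x', y)) (fderiv ℝ Guc (x, y) (1, 0)) x :=
        by have h := (hGd (x, y)).hasFDerivAt.comp_hasDerivAt x h3; exact h
      exact (hGx x y).unique h1
    set Fx : ℝ × ℝ → ℝ := fun p => fderiv ℝ Guc p (1, 0) with hFx
    have hFxc : ContDiff ℝ 1 Fx := (hG.fderiv_right (by norm_num)).clm_apply contDiff_const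
    have hGxx_eq : ∀ x y : ℝ, Gxx x y = fderiv ℝ Fx (x, y) (1, 0) := by
      intro x y
      have h3 : HasDerivAt (fun x' : ℝ => (x', y)) ((1:ℝ), (0:ℝ)) x :=
        (hasDerivAt_id x).prodMk (hasDerivAt_const x y)
      have h1 : HasDerivAt (fun x' => Fx (x', y)) (fderiv ℝ Fx (x, y) (1, 0)) x :=
        by have h := (hFxc.differentiable one_ne_zero (x, y)).hasFDerivAt.comp_hasDerivAt x h3; exact h
      have h4 : (fun x' => Gx x' y) = fun x' => Fx (x', y) := funext fun x' => hGx_eq x' y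
      exact (hGxx x y).unique (h4 ▸ h1)
    have h1 : Continuous fun p : ℝ × ℝ => fderiv ℝ Fx p (1, 0) :=
      (hFxc.continuous_fderiv one_ne_zero).clm_apply continuous_const
    have h2 : (fun p : ℝ × ℝ => Gxx p.1 p.2) = fun p => fderiv ℝ Fx p (1, 0) :=
      funext fun p => hGxx_eq p.1 p.2
    rw [h2]; exact h1
  -- constants
  set R := max C K with hRdef
  have hRnn : 0 ≤ R := le_trans hCnn (le_max_left _ _)
  obtain ⟨M2, hM2⟩ : ∃ M2, ∀ p ∈ Set.Icc (-R) R ×ˢ Set.Icc (-R) R, |Gxx p.1 p.2| ≤ M2 := by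
    obtain ⟨M2, hM2⟩ := (isCompact_Icc.prod isCompact_Icc).exists_bound_of_continuousOn
      hGxxc.continuousOn
    exact ⟨M2, fun p hp => by simpa [Real.norm_eq_abs] using hM2 p hp⟩
  have hM2nn : 0 ≤ M2 := le_trans (abs_nonneg _)
    (hM2 (0, 0) ⟨⟨neg_nonpos.mpr hRnn, hRnn⟩, ⟨neg_nonpos.mpr hRnn, hRnn⟩⟩)
  obtain ⟨L, hLnn, hL⟩ := hLip (-R) R
  -- memberships
  have hmem1 : ∀ u : Set.Ioc (0:ℝ) T, a ↑u ∈ Set.Icc (-R) R := by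
    intro u
    have := abs_le.mp ((hC ↑u ⟨u.2.1.le, u.2.2⟩).trans (le_max_left C K))
    exact ⟨this.1, this.2⟩
  have hmem0 : ∀ u : Set.Ioc (0:ℝ) T, leftVal a ↑u ∈ Set.Icc (-R) R := by
    intro u
    have := abs_le.mp ((hCleft ↑u u.2).trans (le_max_left C K))
    exact ⟨this.1, this.2⟩
  have hKR : ∀ w : ℝ, |w| ≤ K → w ∈ Set.Icc (-R) R := by
    intro w hw
    have := abs_le.mp (hw.trans (le_max_right C K))
    exact ⟨this.1, this.2⟩
  have hb₀K : ∀ u : Set.Ioc (0:ℝ) T, jumpAt a ↑u ≠ 0 → |b₀ ↑u| ≤ K := by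
    intro u hu
    have h1 := hconv ↑u u.2 hu
    exact le_of_tendsto ((continuous_abs.tendsto _).comp h1)
      (Filter.Eventually.of_forall fun n => hbd n ↑u ⟨u.2.1.le, u.2.2⟩)
  -- key Taylor estimate
  have keyA : ∀ y ∈ Set.Icc (-R) R, ∀ u : Set.Ioc (0:ℝ) T,
      |G (a ↑u) y - G (leftVal a ↑u) y - Gx (leftVal a ↑u) y * jumpAt a ↑u|
        ≤ M2 * (jumpAt a ↑u) ^ 2 := by
    intro y hy u
    set x₀ := leftVal a ↑u with hx₀
    set x₁ := a ↑u with hx₁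
    have hsubI : Set.uIcc x₀ x₁ ⊆ Set.Icc (-R) R := Set.uIcc_subset_Icc (hmem0 u) (hmem1 u)
    have hGxlip : ∀ x ∈ Set.uIcc x₀ x₁, |Gx x y - Gx x₀ y| ≤ M2 * |x₁ - x₀| := by
      intro x hx
      have h1 : |Gx x y - Gx x₀ y| ≤ M2 * |x - x₀| :=
        aux_lip (fun x' => Gx x' y) (fun x' => Gxx x' y) (fun x' => hGxx x' y) x₀ x M2
          (fun z hz => hM2 (z, y)
            ⟨hsubI (Set.uIcc_subset_uIcc Set.left_mem_uIcc hx hz), hy⟩)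
      exact h1.trans (mul_le_mul_of_nonneg_left (abs_sub_left_of_mem_uIcc hx) hM2nn)
    have h2 := aux_taylor (fun x' => G x' y) (fun x' => Gx x' y) (fun x' => hGx x' y)
      x₀ x₁ (M2 * |x₁ - x₀|) hGxlip
    have hj : jumpAt a ↑u = x₁ - x₀ := rfl
    calc |G x₁ y - G x₀ y - Gx x₀ y * jumpAt a ↑u|
        = |G x₁ y - G x₀ y - Gx x₀ y * (x₁ - x₀)| := by rw [hj]
      _ ≤ M2 * |x₁ - x₀| * |x₁ - x₀| := h2
      _ = M2 * (jumpAt a ↑u) ^ 2 := by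
          rw [hj, mul_assoc, abs_mul_abs_self, ← pow_two]
  -- key Lipschitz-in-y estimate
  have keyB : ∀ y ∈ Set.Icc (-R) R, ∀ z ∈ Set.Icc (-R) R, ∀ u : Set.Ioc (0:ℝ) T,
      |(G (a ↑u) y - G (leftVal a ↑u) y - Gx (leftVal a ↑u) y * jumpAt a ↑u)
        - (G (a ↑u) z - G (leftVal a ↑u) z - Gx (leftVal a ↑u) z * jumpAt a ↑u)|
        ≤ L * |y - z| * (jumpAt a ↑u) ^ 2 := by
    intro y hy z hz u
    set x₀ := leftVal a ↑u with hx₀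
    set x₁ := a ↑u with hx₁
    have hsubI : Set.uIcc x₀ x₁ ⊆ Set.Icc (-R) R := Set.uIcc_subset_Icc (hmem0 u) (hmem1 u)
    have hd : ∀ x, HasDerivAt (fun x' => G x' y - G x' z) (Gx x y - Gx x z) x :=
      fun x => (hGx x y).sub (hGx x z)
    have hbound : ∀ x ∈ Set.uIcc x₀ x₁,
        |(Gx x y - Gx x z) - (Gx x₀ y - Gx x₀ z)| ≤ L * |y - z| * |x₁ - x₀| := by
      intro x hx
      have h1 := aux_lip (fun x' => Gx x' y - Gx x' z) (fun x' => Gxx x' y - Gxx x' z)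
        (fun x' => (hGxx x' y).sub (hGxx x' z)) x₀ x (L * |y - z|)
        (fun w hw => hL w (hsubI (Set.uIcc_subset_uIcc Set.left_mem_uIcc hx hw)) y hy z hz)
      exact h1.trans (mul_le_mul_of_nonneg_left (abs_sub_left_of_mem_uIcc hx)
        (mul_nonneg hLnn (abs_nonneg _)))
    have h2 := aux_taylor (fun x' => G x' y - G x' z) (fun x' => Gx x' y - Gx x' z)
      hd x₀ x₁ (L * |y - z| * |x₁ - x₀|) hbound
    have hj : jumpAt a ↑u = x₁ - x₀ := rfl
    have e1 : (G x₁ y - G x₀ y - Gx x₀ y * jumpAt a ↑u)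
        - (G x₁ z - G x₀ z - Gx x₀ z * jumpAt a ↑u)
        = (G x₁ y - G x₁ z) - (G x₀ y - G x₀ z) - (Gx x₀ y - Gx x₀ z) * (x₁ - x₀) := by
      rw [hj]; ring
    rw [e1]
    calc |(G x₁ y - G x₁ z) - (G x₀ y - G x₀ z) - (Gx x₀ y - Gx x₀ z) * (x₁ - x₀)|
        ≤ L * |y - z| * |x₁ - x₀| * |x₁ - x₀| := h2
      _ = L * |y - z| * (jumpAt a ↑u) ^ 2 := by
          rw [hj, mul_assoc, abs_mul_abs_self, ← pow_two]
  -- vanishing of terms at continuity points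
  have hjz : ∀ (c : ℝ → ℝ) (u : Set.Ioc (0:ℝ) T), jumpAt a ↑u = 0 →
      G (a ↑u) (c ↑u) - G (leftVal a ↑u) (c ↑u)
        - Gx (leftVal a ↑u) (c ↑u) * jumpAt a ↑u = 0 := by
    intro c u h
    have h' : a ↑u - leftVal a ↑u = 0 := h
    have h'' : a ↑u = leftVal a ↑u := sub_eq_zero.mp h'
    rw [h, h'']; ring
  -- uniform bound of terms
  have hterm_bd : ∀ (c : ℝ → ℝ), (∀ u : Set.Ioc (0:ℝ) T, jumpAt a ↑u ≠ 0 → |c ↑u| ≤ K) →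
      ∀ u : Set.Ioc (0:ℝ) T,
      |G (a ↑u) (c ↑u) - G (leftVal a ↑u) (c ↑u)
        - Gx (leftVal a ↑u) (c ↑u) * jumpAt a ↑u| ≤ M2 * (jumpAt a ↑u) ^ 2 := by
    intro c hc u
    by_cases h : jumpAt a ↑u = 0
    · rw [hjz c u h, h]
      simp
    · exact keyA (c ↑u) (hKR _ (hc u h)) u
  have hg : Summable fun u : Set.Ioc (0:ℝ) T => M2 * (jumpAt a ↑u) ^ 2 := hsum.mul_left _
  have hsummable : ∀ (c : ℝ → ℝ), (∀ u : Set.Ioc (0:ℝ) T, jumpAt a ↑u ≠ 0 → |c ↑u| ≤ K) →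
      Summable fun u : Set.Ioc (0:ℝ) T =>
        G (a ↑u) (c ↑u) - G (leftVal a ↑u) (c ↑u)
          - Gx (leftVal a ↑u) (c ↑u) * jumpAt a ↑u := by
    intro c hc
    exact Summable.of_norm_bounded hg
      (fun u => by simpa [Real.norm_eq_abs] using hterm_bd c hc u)
  have hbK : ∀ n, ∀ u : Set.Ioc (0:ℝ) T, jumpAt a ↑u ≠ 0 → |b n ↑u| ≤ K :=
    fun n u _ => hbd n ↑u ⟨u.2.1.le, u.2.2⟩
  refine ⟨fun n => hsummable (b n) (hbK n), hsummable b₀ hb₀K, ?_⟩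
  -- the differences
  set d : ℕ → Set.Ioc (0:ℝ) T → ℝ := fun n u =>
    (G (a ↑u) (b n ↑u) - G (leftVal a ↑u) (b n ↑u)
      - Gx (leftVal a ↑u) (b n ↑u) * jumpAt a ↑u)
    - (G (a ↑u) (b₀ ↑u) - G (leftVal a ↑u) (b₀ ↑u)
      - Gx (leftVal a ↑u) (b₀ ↑u) * jumpAt a ↑u) with hddef
  have hgs : Summable fun u : Set.Ioc (0:ℝ) T => L * (2 * K) * (jumpAt a ↑u) ^ 2 :=
    hsum.mul_left _
  have hdb : ∀ n u, |d n u| ≤ L * (2 * K) * (jumpAt a ↑u) ^ 2 := by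
    intro n u
    by_cases h : jumpAt a ↑u = 0
    · rw [hddef]
      simp only [hjz (b n) u h, hjz b₀ u h, sub_zero, abs_zero]
      positivity
    · have h1 := keyB (b n ↑u) (hKR _ (hbK n u h)) (b₀ ↑u) (hKR _ (hb₀K u h)) u
      refine h1.trans ?_
      have h2 : |b n ↑u - b₀ ↑u| ≤ 2 * K := by
        rw [sub_eq_add_neg]
        refine (abs_add_le _ _).trans ?_
        rw [abs_neg]
        linarith [hbd n ↑u ⟨u.2.1.le, u.2.2⟩, hb₀K u h]
      exact mul_le_mul_of_nonneg_right (mul_le_mul_of_nonneg_left h2 hLnn) (sq_nonneg _)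
  have hdconv : ∀ u, Filter.Tendsto (fun n => d n u) Filter.atTop (nhds 0) := by
    intro u
    by_cases h : jumpAt a ↑u = 0
    · have : (fun n => d n u) = fun _ => 0 := by
        funext n
        rw [hddef]
        simp [hjz (b n) u h, hjz b₀ u h]
      rw [this]
      exact tendsto_const_nhds
    · rw [tendsto_zero_iff_norm_tendsto_zero]
      simp only [Real.norm_eq_abs]
      apply squeeze_zero (fun n => abs_nonneg _)
        (fun n => (keyB (b n ↑u) (hKR _ (hbK n u h)) (b₀ ↑u) (hKR _ (hb₀K u h)) u))
      have h1 : Filter.Tendsto (fun n => b n ↑u - b₀ ↑u) Filter.atTop (nhds 0) := by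
        simpa using (hconv ↑u u.2 h).sub_const (b₀ ↑u)
      have h2 : Filter.Tendsto (fun n => L * |b n ↑u - b₀ ↑u| * (jumpAt a ↑u) ^ 2)
          Filter.atTop (nhds (L * |(0:ℝ)| * (jumpAt a ↑u) ^ 2)) :=
        ((h1.abs.const_mul L).mul_const _)
      simpa using h2
  have hS : Filter.Tendsto (fun n => ∑' u : Set.Ioc (0:ℝ) T, |d n u|)
      Filter.atTop (nhds 0) := by
    have h := tendsto_tsum_of_dominated_convergence
      (f := fun n (u : Set.Ioc (0:ℝ) T) => |d n u|)
      (g := fun _ => (0:ℝ))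
      (bound := fun u => L * (2 * K) * (jumpAt a ↑u) ^ 2) hgs
      (fun u => by simpa using (hdconv u).abs)
      (Filter.Eventually.of_forall fun n u => by
        simpa [Real.norm_eq_abs, abs_abs] using hdb n u)
    simpa using h
  intro ε hε
  obtain ⟨N, hN⟩ := (Metric.tendsto_atTop.mp hS) ε hε
  refine ⟨N, fun n hn t ht => ?_⟩
  have hds : Summable fun u : Set.Ioc (0:ℝ) T => |d n u| :=
    Summable.of_norm_bounded hgs (fun u => by simpa [abs_abs] using hdb n u)
  have hs1 : Summable fun u : Set.Ioc (0:ℝ) T => (if (u : ℝ) ≤ t then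
      G (a ↑u) (b n ↑u) - G (leftVal a ↑u) (b n ↑u)
        - Gx (leftVal a ↑u) (b n ↑u) * jumpAt a ↑u else 0) := by
    refine Summable.of_norm_bounded hg (fun u => ?_)
    by_cases h : (u : ℝ) ≤ t
    · simpa [h, Real.norm_eq_abs] using hterm_bd (b n) (hbK n) u
    · simp only [h, if_false]
      simpa using mul_nonneg hM2nn (sq_nonneg (jumpAt a ↑u))
  have hs2 : Summable fun u : Set.Ioc (0:ℝ) T => (if (u : ℝ) ≤ t then
      G (a ↑u) (b₀ ↑u) - G (leftVal a ↑u) (b₀ ↑u)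
        - Gx (leftVal a ↑u) (b₀ ↑u) * jumpAt a ↑u else 0) := by
    refine Summable.of_norm_bounded hg (fun u => ?_)
    by_cases h : (u : ℝ) ≤ t
    · simpa [h, Real.norm_eq_abs] using hterm_bd b₀ hb₀K u
    · simp only [h, if_false]
      simpa using mul_nonneg hM2nn (sq_nonneg (jumpAt a ↑u))
  rw [← hs1.tsum_sub hs2]
  have e2 : ∀ u : Set.Ioc (0:ℝ) T,
      (if (u : ℝ) ≤ t then
        G (a ↑u) (b n ↑u) - G (leftVal a ↑u) (b n ↑u)
          - Gx (leftVal a ↑u) (b n ↑u) * jumpAt a ↑u else 0)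
      - (if (u : ℝ) ≤ t then
        G (a ↑u) (b₀ ↑u) - G (leftVal a ↑u) (b₀ ↑u)
          - Gx (leftVal a ↑u) (b₀ ↑u) * jumpAt a ↑u else 0)
      = if (u : ℝ) ≤ t then d n u else 0 := by
    intro u
    by_cases h : (u : ℝ) ≤ t <;> simp [h, hddef]
  have hsd : Summable fun u : Set.Ioc (0:ℝ) T => (if (u : ℝ) ≤ t then d n u else 0) := by
    refine Summable.of_norm_bounded hgs (fun u => ?_)
    by_cases h : (u : ℝ) ≤ t
    · simpa [h, Real.norm_eq_abs] using hdb n u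
    · simp only [h, if_false]
      simpa using le_trans (abs_nonneg (d n u)) (hdb n u)
  calc |∑' u : Set.Ioc (0:ℝ) T,
        ((if (u : ℝ) ≤ t then
          G (a ↑u) (b n ↑u) - G (leftVal a ↑u) (b n ↑u)
            - Gx (leftVal a ↑u) (b n ↑u) * jumpAt a ↑u else 0)
        - (if (u : ℝ) ≤ t then
          G (a ↑u) (b₀ ↑u) - G (leftVal a ↑u) (b₀ ↑u)
            - Gx (leftVal a ↑u) (b₀ ↑u) * jumpAt a ↑u else 0))|
      = |∑' u : Set.Ioc (0:ℝ) T, (if (u : ℝ) ≤ t then d n u else 0)| := by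
        rw [tsum_congr e2]
    _ ≤ ∑' u : Set.Ioc (0:ℝ) T, |if (u : ℝ) ≤ t then d n u else 0| := by
        simpa [Real.norm_eq_abs] using norm_tsum_le_tsum_norm
          (f := fun u : Set.Ioc (0:ℝ) T => (if (u : ℝ) ≤ t then d n u else 0))
          (by simpa [Real.norm_eq_abs] using hsd.abs)
    _ ≤ ∑' u : Set.Ioc (0:ℝ) T, |d n u| := by
        refine Summable.tsum_le_tsum (fun u => ?_) ?_ hds
        · by_cases h : (u : ℝ) ≤ t <;> simp [h]
        · exact hds.of_nonneg_of_le (fun u => abs_nonneg _)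
            (fun u => by by_cases h : (u : ℝ) ≤ t <;> simp [h])
    _ ≤ ε := by
        have h1 := hN n hn
        rw [Real.dist_eq, sub_zero] at h1
        have h2 : 0 ≤ ∑' u : Set.Ioc (0:ℝ) T, |d n u| := tsum_nonneg (fun u => abs_nonneg _)
        rw [abs_of_nonneg h2] at h1
        exact h1.le
end
end

section
/- Fix constants β > 0, σ̂ > 0 and 0 < λ_min ≤ λ_max. Let f : ℝ → ℝ be three times continuously differentiable with f > 0 and f' > 0, such that λ_min ≤ f'(y)/f(y) ≤ λ_max for all y ∈ ℝ and the derivative of y ↦ f'(y)/f(y) is bounded on ℝ. Define k(y) := (σ̂²/2)·f''(y)/f(y) − β − β·y·f'(y)/f(y) and ψ(y) := −β·y·f(y) + (σ̂²/2)·f'(y), assume k is strictly decreasing on ℝ, and let y* be its unique zero. Then ψ is strictly concave on [y*, ∞). -/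
open Filter Set Topology

noncomputable section

/-- with `ψ(y) = −β·y·f(y) + (σ̂²/2)·f'(y)` and
`k(y) = (σ̂²/2)·f''(y)/f(y) − β − β·y·f'(y)/f(y)` strictly decreasing with unique
zero `y*`, and `f` three times continuously differentiable, the function `ψ` is
strictly concave on `[y*, ∞)`. -/
theorem psi_strictly_concave_right_of_ystar
    (β σ lmin lmax : ℝ) (hβ : 0 < β) (hσ : 0 < σ)
    (hlmin : 0 < lmin) (hll : lmin ≤ lmax)
    (f : ℝ → ℝ) (hf : ContDiff ℝ 3 f)
    (hfpos : ∀ y, 0 < f y) (hf' : ∀ y, 0 < deriv f y)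
    (hlam : ∀ y, lmin ≤ deriv f y / f y ∧ deriv f y / f y ≤ lmax)
    (hlam' : ∃ C : ℝ, ∀ y, |deriv (fun z => deriv f z / f z) y| ≤ C)
    (k : ℝ → ℝ)
    (hk : ∀ y, k y = σ ^ 2 / 2 * (deriv (deriv f) y / f y)
      - β - β * y * (deriv f y / f y))
    (hkanti : StrictAnti k)
    (ψ : ℝ → ℝ)
    (hψ : ∀ y, ψ y = -β * y * f y + σ ^ 2 / 2 * deriv f y)
    (ystar : ℝ) (hstar : k ystar = 0) :
    StrictConcaveOn ℝ (Set.Ici ystar) ψ := by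
  have hψf : ψ = fun y => -β * y * f y + σ ^ 2 / 2 * deriv f y := funext hψ
  have hfd : Differentiable ℝ f := hf.differentiable (by norm_num)
  have hf2 : ContDiff ℝ 2 (deriv f) := by
    have : ContDiff ℝ ((2 : ℕ) + 1) f := by exact_mod_cast hf
    exact (contDiff_succ_iff_deriv.mp this).2.2
  have hfd2 : Differentiable ℝ (deriv f) := hf2.differentiable (by norm_num)
  have hmono : StrictMono f := strictMono_of_deriv_pos hf'
  have hderiv : ∀ y, deriv ψ y = f y * k y := by
    intro y
    have h1 : HasDerivAt f (deriv f y) y := (hfd y).hasDerivAt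
    have h2 : HasDerivAt (deriv f) (deriv (deriv f) y) y := (hfd2 y).hasDerivAt
    have h3 : HasDerivAt (fun z : ℝ => -β * z * f z + σ ^ 2 / 2 * deriv f z)
        (-β * f y + -β * y * deriv f y + σ ^ 2 / 2 * deriv (deriv f) y) y := by
      have ha : HasDerivAt (fun z : ℝ => -β * z * f z)
          (-β * f y + -β * y * deriv f y) y := by
        have := ((hasDerivAt_id y).const_mul (-β)).mul h1
        refine this.congr_deriv ?_
        simp only [id_eq]
        ring
      have hb := h2.const_mul (σ ^ 2 / 2)
      exact ha.add hb
    rw [hψf, h3.deriv, hk y]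
    have hfy := (hfpos y).ne'
    field_simp
    ring
  have hcont : ContinuousOn ψ (Set.Ici ystar) := by
    rw [hψf]
    exact (((continuous_const.mul continuous_id).mul hfd.continuous).add
      (continuous_const.mul hf2.continuous)).continuousOn
  have hanti : StrictAntiOn (deriv ψ) (interior (Set.Ici ystar)) := by
    rw [interior_Ici]
    intro x hx y hy hxy
    rw [hderiv, hderiv]
    have hkx : k x < 0 := by rw [← hstar]; exact hkanti hx
    have hky : k y < k x := hkanti hxy
    have hfxy : f x < f y := hmono hxy
    have hfx : 0 < f x := hfpos x
    nlinarith
  exact hanti.strictConcaveOn_of_deriv (convex_Ici ystar) hcont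
end
end

section
/- Fix constants β > 0, σ̂ > 0 and 0 < λ_min ≤ λ_max. Let f : ℝ → ℝ be twice continuously differentiable with f > 0 and f' > 0, such that λ_min ≤ f'(y)/f(y) ≤ λ_max for all y ∈ ℝ and the derivative of y ↦ f'(y)/f(y) is bounded on ℝ. Define k(y) := (σ̂²/2)·f''(y)/f(y) − β − β·y·f'(y)/f(y) and ψ(y) := −β·y·f(y) + (σ̂²/2)·f'(y), assume k is strictly decreasing on ℝ, and let y* be its unique zero. Then for every y ∈ ℝ: inf{ a·y + b : a, b ∈ ℝ such that ψ(x) ≤ a·x + b for all x ∈ ℝ } = ψ(max(y, y*)). In other words, the pointwise infimum of all affine majorants of ψ (its concave hull) equals the function y ↦ ψ(y ∨ y*). -/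
open Filter Set Topology

noncomputable section

/-- the concave hull of `ψ(y) = −β·y·f(y) + (σ̂²/2)·f'(y)`, i.e. the
pointwise infimum of all affine majorants of `ψ`, equals `y ↦ ψ(y ∨ y*)`, where `y*`
is the unique zero of the strictly decreasing function
`k(y) = (σ̂²/2)·f''(y)/f(y) − β − β·y·f'(y)/f(y)`. -/
theorem concave_hull_of_psi
    (β σ lmin lmax : ℝ) (hβ : 0 < β) (hσ : 0 < σ)
    (hlmin : 0 < lmin) (hll : lmin ≤ lmax)
    (f : ℝ → ℝ) (hf : ContDiff ℝ 2 f)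
    (hfpos : ∀ y, 0 < f y) (hf' : ∀ y, 0 < deriv f y)
    (hlam : ∀ y, lmin ≤ deriv f y / f y ∧ deriv f y / f y ≤ lmax)
    (hlam' : ∃ C : ℝ, ∀ y, |deriv (fun z => deriv f z / f z) y| ≤ C)
    (k : ℝ → ℝ)
    (hk : ∀ y, k y = σ ^ 2 / 2 * (deriv (deriv f) y / f y)
      - β - β * y * (deriv f y / f y))
    (hkanti : StrictAnti k)
    (ψ : ℝ → ℝ)
    (hψ : ∀ y, ψ y = -β * y * f y + σ ^ 2 / 2 * deriv f y)
    (ystar : ℝ) (hstar : k ystar = 0) :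
    ∀ y : ℝ,
      sInf {v : ℝ | ∃ A B : ℝ, (∀ x : ℝ, ψ x ≤ A * x + B) ∧ v = A * y + B}
        = ψ (max y ystar) := by
  -- basic differentiability
  have hfd : Differentiable ℝ f := hf.differentiable two_ne_zero
  have hfd' : Differentiable ℝ (deriv f) :=
    ((contDiff_succ_iff_deriv (n := 1)).mp (by exact_mod_cast hf)).2.2.differentiable one_ne_zero
  -- derivative of ψ
  have hψd : ∀ x, HasDerivAt ψ (f x * k x) x := by
    intro x
    have h1 : HasDerivAt f (deriv f x) x := (hfd x).hasDerivAt
    have h2 : HasDerivAt (deriv f) (deriv (deriv f) x) x := (hfd' x).hasDerivAt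
    have h3 : HasDerivAt (fun y => -β * (y * f y) + σ ^ 2 / 2 * deriv f y)
        (-β * (1 * f x + x * deriv f x) + σ ^ 2 / 2 * deriv (deriv f) x) x :=
      (((hasDerivAt_id x).mul h1).const_mul (-β)).add (h2.const_mul (σ ^ 2 / 2))
    have heq : ψ = fun y => -β * (y * f y) + σ ^ 2 / 2 * deriv f y := by
      funext z; rw [hψ z]; ring
    rw [heq]
    convert h3 using 1
    have hfx := (hfpos x).ne'
    rw [hk x]
    field_simp
    ring
  have hψdiff : Differentiable ℝ ψ := fun x => (hψd x).differentiableAt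
  have hψderiv : ∀ x, deriv ψ x = f x * k x := fun x => (hψd x).deriv
  -- sign of k
  have hkpos : ∀ x, x < ystar → 0 < k x := fun x hx => by
    have := hkanti hx; rw [hstar] at this; linarith
  have hkneg : ∀ x, ystar < x → k x < 0 := fun x hx => by
    have := hkanti hx; rw [hstar] at this; linarith
  have hknp : ∀ x, ystar ≤ x → k x ≤ 0 := by
    intro x hx
    rcases eq_or_lt_of_le hx with h | h
    · rw [← h, hstar]
    · exact (hkneg x h).le
  -- ψ has a global max at ystar
  have hψmax : ∀ x, ψ x ≤ ψ ystar := by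
    intro x
    rcases le_or_gt x ystar with h | h
    · rcases eq_or_lt_of_le h with h' | h'
      · rw [h']
      · have hmono : StrictMonoOn ψ (Iic ystar) := by
          apply strictMonoOn_of_deriv_pos (convex_Iic _) hψdiff.continuous.continuousOn
          intro z hz
          rw [interior_Iic] at hz
          rw [hψderiv z]
          exact mul_pos (hfpos z) (hkpos z hz)
        exact (hmono h self_mem_Iic h').le
    · have hanti : StrictAntiOn ψ (Ici ystar) := by
        apply strictAntiOn_of_deriv_neg (convex_Ici _) hψdiff.continuous.continuousOn
        intro z hz
        rw [interior_Ici] at hz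
        rw [hψderiv z]
        exact mul_neg_of_pos_of_neg (hfpos z) (hkneg z hz)
      exact (hanti (self_mem_Ici) h.le h).le
  -- ψ is positive for nonpositive arguments
  have hψpos : ∀ x, x ≤ 0 → 0 < ψ x := by
    intro x hx
    rw [hψ x]
    have h1 := hfpos x
    have h2 := hf' x
    nlinarith [mul_nonneg (mul_nonneg hβ.le (neg_nonneg.mpr hx)) h1.le, mul_pos (mul_pos hσ hσ) h2]
  -- every affine majorant has nonpositive slope
  have hAle : ∀ A B : ℝ, (∀ x, ψ x ≤ A * x + B) → A ≤ 0 := by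
    intro A B hAB
    by_contra h
    push_neg at h
    set x := min (-1) ((-B - 1) / A) with hxdef
    have hx0 : x ≤ 0 := le_trans (min_le_left _ _) (by norm_num)
    have hx1 : x ≤ (-B - 1) / A := min_le_right _ _
    have hax : A * x ≤ -B - 1 := by
      rw [mul_comm]
      exact (le_div_iff₀ h).mp hx1
    have := hAB x
    have := hψpos x hx0
    linarith
  -- f is strictly monotone
  have hfmono : StrictMono f := strictMono_of_deriv_pos hf'
  -- ψ' = f·k is strictly decreasing on [ystar, ∞)
  have hψ'anti : ∀ a b, ystar ≤ a → a < b → f b * k b < f a * k a := by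
    intro a b ha hab
    have hka : k a ≤ 0 := hknp a ha
    have hkb : k b < k a := hkanti hab
    have hfa : f a < f b := hfmono hab
    have h1 := hfpos a
    nlinarith
  -- the tangent line at y > ystar is an affine majorant
  have htangent : ∀ y, ystar < y →
      ∀ x, ψ x ≤ f y * k y * x + (ψ y - f y * k y * y) := by
    intro y hy
    set A := f y * k y with hA
    set B := ψ y - A * y with hB
    have hAneg : A < 0 := mul_neg_of_pos_of_neg (hfpos y) (hkneg y hy)
    set g : ℝ → ℝ := fun x => A * x + B - ψ x with hg
    have hgd : ∀ x, HasDerivAt g (A - f x * k x) x := by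
      intro x
      have : HasDerivAt (fun z => A * z + B) A x := by
        simpa using ((hasDerivAt_id x).const_mul A).add_const B
      exact this.sub (hψd x)
    have hgdiff : Differentiable ℝ g := fun x => (hgd x).differentiableAt
    have hgderiv : ∀ x, deriv g x = A - f x * k x := fun x => (hgd x).deriv
    have hgy : g y = 0 := by simp [hg, hB]
    -- g ≥ 0 on [ystar, y]
    have hleft : ∀ x, ystar ≤ x → x ≤ y → 0 ≤ g x := by
      intro x hx1 hx2
      have hanti : StrictAntiOn g (Icc ystar y) := by
        apply strictAntiOn_of_deriv_neg (convex_Icc _ _) hgdiff.continuous.continuousOn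
        intro z hz
        rw [interior_Icc] at hz
        rw [hgderiv z, hA]
        have := hψ'anti z y hz.1.le hz.2
        linarith
      rcases eq_or_lt_of_le hx2 with h | h
      · rw [h, hgy]
      · have := hanti ⟨hx1, hx2⟩ ⟨hy.le, le_refl y⟩ h
        rw [hgy] at this
        linarith
    -- g ≥ 0 on [y, ∞)
    have hright : ∀ x, y ≤ x → 0 ≤ g x := by
      intro x hx
      have hmono : StrictMonoOn g (Ici y) := by
        apply strictMonoOn_of_deriv_pos (convex_Ici _) hgdiff.continuous.continuousOn
        intro z hz
        rw [interior_Ici] at hz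
        rw [hgderiv z, hA]
        have := hψ'anti y z hy.le hz
        linarith
      rcases eq_or_lt_of_le hx with h | h
      · rw [← h, hgy]
      · have := hmono self_mem_Ici hx h
        rw [hgy] at this
        linarith
    intro x
    rcases le_or_gt ystar x with h | h
    · rcases le_or_gt x y with h' | h'
      · have := hleft x h h'
        simp only [hg] at this; linarith
      · have := hright x h'.le
        simp only [hg] at this; linarith
    · -- x < ystar : A*x + B ≥ A*ystar + B ≥ ψ ystar ≥ ψ x
      have h1 : 0 ≤ g ystar := hleft ystar (le_refl _) hy.le
      have h2 : A * ystar ≤ A * x := by nlinarith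
      have h3 := hψmax x
      simp only [hg] at h1
      linarith
  -- conclusion
  intro y
  set S := {v : ℝ | ∃ A B : ℝ, (∀ x : ℝ, ψ x ≤ A * x + B) ∧ v = A * y + B} with hS
  have hlb : ∀ v ∈ S, ψ (max y ystar) ≤ v := by
    rintro v ⟨A, B, hAB, rfl⟩
    rcases le_or_gt y ystar with h | h
    · rw [max_eq_right h]
      have hA := hAle A B hAB
      have : A * ystar ≤ A * y := by nlinarith
      have := hAB ystar
      linarith
    · rw [max_eq_left h.le]
      exact hAB y
  rcases le_or_gt y ystar with h | h
  · rw [max_eq_right h]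
    have hmem : ψ ystar ∈ S := by
      refine ⟨0, ψ ystar, fun x => by simpa using hψmax x, by ring⟩
    apply le_antisymm
    · exact csInf_le ⟨ψ (max y ystar), hlb⟩ hmem
    · rw [← max_eq_right h]
      exact le_csInf ⟨_, hmem⟩ hlb
  · rw [max_eq_left h.le]
    have hmem : ψ y ∈ S := by
      refine ⟨f y * k y, ψ y - f y * k y * y, htangent y h, by ring⟩
    apply le_antisymm
    · exact csInf_le ⟨ψ (max y ystar), hlb⟩ hmem
    · rw [← max_eq_left h.le]
      exact le_csInf ⟨_, hmem⟩ hlb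
end
end
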